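/- arXiv:2112.01721 — 6 statements merged into one kernel-verified Lean document; each statement's English description precedes it below -/
import Mathlib

section
/- If N is a nonnegative square real matrix and M is a nonnegative matrix of the same size with M ≤ N entrywise, then the spectral radius of M is at most the spectral radius of N. -/
/-- The spectral radius of a real square matrix: the maximum of the complex moduli
of its eigenvalues (roots of the characteristic polynomial over ℂ). -/
noncomputable def specRad {m : Type*} [Fintype m] [DecidableEq m] (M : Matrix m m ℝ) : ℝ :=
  sSup {r : ℝ | ∃ μ : ℂ, (M.map (fun x => (x : ℂ))).charpoly.IsRoot μ ∧ r = ‖μ‖}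

open Polynomial Filter
open scoped ENNReal NNReal

namespace SpecRadAux

lemma spectrum_eq_root {n : Type*} [Fintype n] [DecidableEq n] (A : Matrix n n ℂ) (μ : ℂ) :
    μ ∈ spectrum ℂ A ↔ A.charpoly.IsRoot μ := by
  rw [spectrum.mem_iff, Matrix.isUnit_iff_isUnit_det, isUnit_iff_ne_zero, not_not,
    Polynomial.IsRoot, Matrix.charpoly, ← Polynomial.coe_evalRingHom, RingHom.map_det]
  have : (evalRingHom μ).mapMatrix A.charmatrix = (algebraMap ℂ (Matrix n n ℂ)) μ - A := by
    ext i j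
    by_cases h : i = j <;>
      simp [h, Matrix.charmatrix, Matrix.map_apply, Algebra.algebraMap_eq_smul_one,
        Matrix.sub_apply, Matrix.smul_apply, Matrix.one_apply, Matrix.diagonal]
  rw [this]

attribute [local instance] Matrix.linftyOpNormedRing Matrix.linftyOpNormedAlgebra

variable {n : ℕ}

lemma pow_entry_le (M N : Matrix (Fin n) (Fin n) ℝ)
    (hM : ∀ i j, 0 ≤ M i j) (hMN : ∀ i j, M i j ≤ N i j) (k : ℕ) :
    (∀ i j, 0 ≤ (M ^ k) i j) ∧ (∀ i j, (M ^ k) i j ≤ (N ^ k) i j) := by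
  induction k with
  | zero =>
    constructor <;> intro i j <;> simp [Matrix.one_apply] <;> positivity
  | succ k ih =>
    obtain ⟨h0, h1⟩ := ih
    constructor
    · intro i j
      rw [pow_succ, Matrix.mul_apply]
      exact Finset.sum_nonneg fun l _ => mul_nonneg (h0 i l) (hM l j)
    · intro i j
      rw [pow_succ, pow_succ, Matrix.mul_apply, Matrix.mul_apply]
      refine Finset.sum_le_sum fun l _ => mul_le_mul (h1 i l) (hMN l j) (hM l j) ?_
      exact (h0 i l).trans (h1 i l)

noncomputable def cplx (M : Matrix (Fin n) (Fin n) ℝ) : Matrix (Fin n) (Fin n) ℂ :=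
  M.map (fun x => (x : ℂ))

lemma cplx_pow (M : Matrix (Fin n) (Fin n) ℝ) (k : ℕ) : cplx (M ^ k) = (cplx M) ^ k := by
  have : cplx (M ^ k) = (Complex.ofRealHom.mapMatrix (M ^ k)) := rfl
  rw [this, map_pow]; rfl

lemma nnnorm_cplx_le {M N : Matrix (Fin n) (Fin n) ℝ}
    (hM : ∀ i j, 0 ≤ M i j) (hMN : ∀ i j, M i j ≤ N i j) :
    ‖cplx M‖₊ ≤ ‖cplx N‖₊ := by
  rw [Matrix.linfty_opNNNorm_def, Matrix.linfty_opNNNorm_def]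
  refine Finset.sup_mono_fun fun i _ => Finset.sum_le_sum fun j _ => ?_
  have h : |M i j| ≤ |N i j| :=
    abs_le_abs (hMN i j) ((neg_nonpos.mpr (hM i j)).trans ((hM i j).trans (hMN i j)))
  simpa [cplx, Matrix.map_apply, ← NNReal.coe_le_coe, coe_nnnorm, Complex.norm_real,
    Real.norm_eq_abs] using h

/-- The set whose sup is `specRad`. -/
def S (M : Matrix (Fin n) (Fin n) ℝ) : Set ℝ :=
  {r : ℝ | ∃ μ : ℂ, (cplx M).charpoly.IsRoot μ ∧ r = ‖μ‖}

lemma S_finite (M : Matrix (Fin n) (Fin n) ℝ) : (S M).Finite := by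
  have hne : (cplx M).charpoly ≠ 0 := (Matrix.charpoly_monic _).ne_zero
  have : S M ⊆ (fun μ : ℂ => ‖μ‖) '' {μ : ℂ | (cplx M).charpoly.IsRoot μ} := by
    rintro r ⟨μ, hμ, rfl⟩; exact ⟨μ, hμ, rfl⟩
  exact Set.Finite.subset (Set.Finite.image _ (Polynomial.finite_setOf_isRoot hne)) this

lemma ofReal_sSup_le (M : Matrix (Fin n) (Fin n) ℝ) :
    ENNReal.ofReal (sSup (S M)) ≤ spectralRadius ℂ (cplx M) := by
  rcases (S M).eq_empty_or_nonempty with h | h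
  · rw [h]; simp [Real.sSup_empty]
  · obtain ⟨μ, hμ, hsup⟩ := (h.csSup_mem (S_finite M) : sSup (S M) ∈ S M)
    rw [hsup]
    have hmem : μ ∈ spectrum ℂ (cplx M) := (spectrum_eq_root _ μ).2 hμ
    have : ENNReal.ofReal ‖μ‖ = (‖μ‖₊ : ℝ≥0∞) := by
      rw [ofReal_norm, enorm_eq_nnnorm]
    rw [this]
    exact le_iSup₂ (f := fun k (_ : k ∈ spectrum ℂ (cplx M)) => (‖k‖₊ : ℝ≥0∞)) μ hmem

lemma le_ofReal_sSup (M : Matrix (Fin n) (Fin n) ℝ) :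
    spectralRadius ℂ (cplx M) ≤ ENNReal.ofReal (sSup (S M)) := by
  refine iSup₂_le fun μ hμ => ?_
  have hμ' : (cplx M).charpoly.IsRoot μ := (spectrum_eq_root _ μ).1 hμ
  have hmem : ‖μ‖ ∈ S M := ⟨μ, hμ', rfl⟩
  have : (‖μ‖₊ : ℝ≥0∞) = ENNReal.ofReal ‖μ‖ := by
    rw [ofReal_norm, enorm_eq_nnnorm]
  rw [this]
  exact ENNReal.ofReal_le_ofReal (le_csSup ((S_finite M).bddAbove) hmem)

lemma sSup_S_nonneg (M : Matrix (Fin n) (Fin n) ℝ) : 0 ≤ sSup (S M) := by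
  rcases (S M).eq_empty_or_nonempty with h | h
  · rw [h, Real.sSup_empty]
  · obtain ⟨r, hr⟩ := h
    obtain ⟨μ, _, rfl⟩ := hr
    exact (norm_nonneg μ).trans (le_csSup ((S_finite M).bddAbove) ⟨μ, ‹_›, rfl⟩)

lemma specRad_mono (M N : Matrix (Fin n) (Fin n) ℝ)
    (hM : ∀ i j, 0 ≤ M i j) (hMN : ∀ i j, M i j ≤ N i j) :
    sSup (S M) ≤ sSup (S N) := by
  have key : spectralRadius ℂ (cplx M) ≤ spectralRadius ℂ (cplx N) := by
    calc spectralRadius ℂ (cplx M)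
        ≤ atTop.liminf fun k : ℕ => (‖(cplx M) ^ k‖₊ : ℝ≥0∞) ^ (1 / k : ℝ) :=
          spectrum.spectralRadius_le_liminf_pow_nnnorm_pow_one_div ℂ (cplx M)
      _ ≤ atTop.liminf fun k : ℕ => (‖(cplx N) ^ k‖₊ : ℝ≥0∞) ^ (1 / k : ℝ) := by
          refine Filter.liminf_le_liminf (Eventually.of_forall fun k => ?_)
          have h := pow_entry_le M N hM hMN k
          have := nnnorm_cplx_le h.1 h.2
          rw [← cplx_pow, ← cplx_pow]
          exact ENNReal.rpow_le_rpow (ENNReal.coe_le_coe.2 this)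
            (by positivity)
      _ = spectralRadius ℂ (cplx N) :=
          (spectrum.pow_nnnorm_pow_one_div_tendsto_nhds_spectralRadius (cplx N)).liminf_eq
  have h1 : ENNReal.ofReal (sSup (S M)) ≤ ENNReal.ofReal (sSup (S N)) :=
    (ofReal_sSup_le M).trans (key.trans (le_ofReal_sSup N))
  have h2 := ENNReal.toReal_mono ENNReal.ofReal_ne_top h1
  rwa [ENNReal.toReal_ofReal (sSup_S_nonneg M), ENNReal.toReal_ofReal (sSup_S_nonneg N)] at h2

end SpecRadAux

theorem specRad_le_of_entrywise_le {n : ℕ} (M N : Matrix (Fin n) (Fin n) ℝ)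
    (hM : ∀ i j, 0 ≤ M i j) (hMN : ∀ i j, M i j ≤ N i j) :
    specRad M ≤ specRad N :=
  SpecRadAux.specRad_mono M N hM hMN
end

section
/- Let G be a mixed graph on vertex set [n] with adjacency matrix A (a 0-1 matrix where a_{ij} = 1 iff there is an arc from i to j or an undirected edge between i and j), and let a, b be distinct vertices with a_{ab} = a_{ba} = 0. Let G_b^a be the Kelmans transformation of G from b to a, whose adjacency matrix A' satisfies: a'_{ia} = max(a_{ia}, a_{ib}), a'_{ib} = min(a_{ia}, a_{ib}), a'_{aj} = max(a_{aj}, a_{bj}), a'_{bj} = min(a_{aj}, a_{bj}) for i,j ∉ {a,b}, and a'_{ij} = a_{ij} otherwise. Then for any α ∈ [0,1], A_α(G_b^a) is obtained from A_α(G) by a matrix Kelmans transformation: specifically, A_α(G_b^a) = A_α(G)_b^a with k = α·|N⁺(b) \ N⁺(a)|, t_i = (1−α)·max(0, a_{ib} − a_{ia}), and s_i = (1−α)·max(0, a_{bi} − a_{ai}). -/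
attribute [local instance] Classical.propDecidable

/-- The `A_α` matrix `α D⁺ + (1-α) A` of a mixed graph given by its adjacency matrix `A`,
where `D⁺` is the diagonal out-degree matrix. -/
noncomputable def Aalpha {n : ℕ} (α : ℝ) (A : Matrix (Fin n) (Fin n) ℝ) :
    Matrix (Fin n) (Fin n) ℝ :=
  α • Matrix.diagonal (fun i => ∑ j, A i j) + (1 - α) • A

/-- The Kelmans transformation of a mixed graph (given by its 0-1 adjacency matrix)
from `b` to `a`. -/
noncomputable def kelmansG {n : ℕ} (A : Matrix (Fin n) (Fin n) ℝ) (a b : Fin n) :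
    Matrix (Fin n) (Fin n) ℝ :=
  Matrix.of fun i j =>
    if i ≠ a ∧ i ≠ b ∧ j = a then max (A i a) (A i b)
    else if i ≠ a ∧ i ≠ b ∧ j = b then min (A i a) (A i b)
    else if i = a ∧ j ≠ a ∧ j ≠ b then max (A a j) (A b j)
    else if i = b ∧ j ≠ a ∧ j ≠ b then min (A a j) (A b j)
    else A i j

/-- `A` is the adjacency matrix of a mixed graph: a 0-1 matrix with zero diagonal. -/
def IsMixedAdj {n : ℕ} (A : Matrix (Fin n) (Fin n) ℝ) : Prop :=
  (∀ i j, A i j = 0 ∨ A i j = 1) ∧ ∀ i, A i i = 0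

/-- The underlying simple graph of a mixed graph: forget orientations. -/
def underlying {n : ℕ} (A : Matrix (Fin n) (Fin n) ℝ) : SimpleGraph (Fin n) where
  Adj u v := u ≠ v ∧ (A u v = 1 ∨ A v u = 1)
  symm := ⟨fun u v ⟨h1, h2⟩ => ⟨h1.symm, h2.symm⟩⟩
  loopless := ⟨fun u h => h.1 rfl⟩

/-- The graph of undirected edges of a mixed graph (delete all arcs). -/
def undirPart {n : ℕ} (A : Matrix (Fin n) (Fin n) ℝ) : SimpleGraph (Fin n) where
  Adj u v := u ≠ v ∧ A u v = 1 ∧ A v u = 1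
  symm := ⟨fun u v ⟨h1, h2, h3⟩ => ⟨h1.symm, h3, h2⟩⟩
  loopless := ⟨fun u h => h.1 rfl⟩

/-- The Kelmans transformation of a matrix `C` from `b` to `a` with respect to `(tᵢ; sᵢ; k)`. -/
noncomputable def kelmansMat {n : ℕ} (C : Matrix (Fin n) (Fin n) ℝ) (a b : Fin n)
    (t s : Fin n → ℝ) (k : ℝ) : Matrix (Fin n) (Fin n) ℝ :=
  Matrix.of fun i j =>
    if i = a ∧ j = a then C a a + k
    else if i = b ∧ j = b then C b b - k
    else if i ≠ a ∧ i ≠ b ∧ j = a then C i a + t i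
    else if i ≠ a ∧ i ≠ b ∧ j = b then C i b - t i
    else if i = a ∧ j ≠ a ∧ j ≠ b then C a j + s j
    else if i = b ∧ j ≠ a ∧ j ≠ b then C b j - s j
    else C i j

section rows
variable {n : ℕ} (A : Matrix (Fin n) (Fin n) ℝ) (a b : Fin n)

lemma kelmans_row_other (hA : IsMixedAdj A) (hab : a ≠ b) (i : Fin n) (hia : i ≠ a)
    (hib : i ≠ b) : ∑ j, kelmansG A a b i j = ∑ j, A i j := by
  have key : ∀ j, kelmansG A a b i j =
      A i j + ((if j = a then max 0 (A i b - A i a) else 0)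
        - (if j = b then max 0 (A i b - A i a) else 0)) := by
    intro j
    by_cases hja : j = a
    · rcases hA.1 i a with h1 | h1 <;> rcases hA.1 i b with h2 | h2 <;>
        norm_num [kelmansG, hja, hia, hib, hab, h1, h2]
    · by_cases hjb : j = b
      · rcases hA.1 i a with h1 | h1 <;> rcases hA.1 i b with h2 | h2 <;>
          norm_num [kelmansG, hjb, hia, hib, hab, hab.symm, h1, h2]
      · simp [kelmansG, hia, hib, hja, hjb]
  rw [Finset.sum_congr rfl (fun j _ => key j), Finset.sum_add_distrib,
    Finset.sum_sub_distrib, Finset.sum_ite_eq' Finset.univ a, Finset.sum_ite_eq' Finset.univ b]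
  simp

lemma kelmans_row_a (hA : IsMixedAdj A) (hab : a ≠ b) (hba : A a b = 0) (hba' : A b a = 0) :
    ∑ j, kelmansG A a b a j =
      ∑ j, A a j + ((Finset.univ.filter fun j => A b j = 1 ∧ ¬ A a j = 1).card : ℝ) := by
  have key : ∀ j, kelmansG A a b a j =
      A a j + (if A b j = 1 ∧ ¬ A a j = 1 then (1:ℝ) else 0) := by
    intro j
    by_cases hja : j = a
    · norm_num [kelmansG, hja, hab, hA.2 a, hba']
    · by_cases hjb : j = b
      · norm_num [kelmansG, hjb, hab, hA.2 b, hba]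
      · rcases hA.1 a j with h1 | h1 <;> rcases hA.1 b j with h2 | h2 <;>
          norm_num [kelmansG, hja, hjb, hab, h1, h2]
  rw [Finset.sum_congr rfl (fun j _ => key j), Finset.sum_add_distrib, Finset.sum_boole]

lemma kelmans_row_b (hA : IsMixedAdj A) (hab : a ≠ b) (hba : A a b = 0) (hba' : A b a = 0) :
    ∑ j, kelmansG A a b b j =
      ∑ j, A b j - ((Finset.univ.filter fun j => A b j = 1 ∧ ¬ A a j = 1).card : ℝ) := by
  have key : ∀ j, kelmansG A a b b j =
      A b j - (if A b j = 1 ∧ ¬ A a j = 1 then (1:ℝ) else 0) := by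
    intro j
    by_cases hja : j = a
    · norm_num [kelmansG, hja, hab, hab.symm, hA.2 a, hba']
    · by_cases hjb : j = b
      · norm_num [kelmansG, hjb, hab, hab.symm, hA.2 b, hba]
      · rcases hA.1 a j with h1 | h1 <;> rcases hA.1 b j with h2 | h2 <;>
          norm_num [kelmansG, hja, hjb, hab, hab.symm, h1, h2]
  rw [Finset.sum_congr rfl (fun j _ => key j), Finset.sum_sub_distrib, Finset.sum_boole]

end rows

set_option maxHeartbeats 1000000 in
/-- The `A_α` matrix of the graph Kelmans transformation `G_b^a` is the matrix Kelmans
transformation of `A_α(G)` with `k = α|N⁺(b)∖N⁺(a)|`, `tᵢ = (1-α)max(0, a_{ib}-a_{ia})`,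
`sᵢ = (1-α)max(0, a_{bi}-a_{ai})`. -/
theorem Aalpha_kelmansG_eq_kelmansMat {n : ℕ} (α : ℝ) (hα : α ∈ Set.Icc (0:ℝ) 1)
    (A : Matrix (Fin n) (Fin n) ℝ) (hA : IsMixedAdj A)
    (a b : Fin n) (hab : a ≠ b) (hba : A a b = 0) (hba' : A b a = 0) :
    Aalpha α (kelmansG A a b) =
      kelmansMat (Aalpha α A) a b
        (fun i => (1 - α) * max 0 (A i b - A i a))
        (fun i => (1 - α) * max 0 (A b i - A a i))
        (α * ((Finset.univ.filter fun j => A b j = 1 ∧ ¬ A a j = 1).card : ℝ)) := by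
  have e1 : kelmansG A a b a a = 0 := by simp [kelmansG, hab, hA.2 a]
  have e2 : kelmansG A a b b b = 0 := by simp [kelmansG, hab, hab.symm, hA.2 b]
  have e3 : kelmansG A a b a b = A a b := by simp [kelmansG, hab, hab.symm]
  have e4 : kelmansG A a b b a = A b a := by simp [kelmansG, hab, hab.symm]
  ext i j
  simp only [Aalpha, kelmansMat, Matrix.add_apply, Matrix.smul_apply,
    Matrix.diagonal_apply, Matrix.of_apply, smul_eq_mul]
  by_cases hia : i = a
  · by_cases hja : j = a
    · simp [hia, hja, hab, e1, kelmans_row_a A a b hA hab hba hba', hA.2 a]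
      ring
    · by_cases hjb : j = b
      · simp [hia, hjb, hab, hab.symm, e3]
      · rcases hA.1 a j with h1 | h1 <;> rcases hA.1 b j with h2 | h2 <;>
          norm_num [kelmansG, hia, hja, hjb, hab, Ne.symm hja, h1, h2] <;> ring
  · by_cases hib : i = b
    · by_cases hja : j = a
      · simp [hib, hja, hab, hab.symm, e4]
      · by_cases hjb : j = b
        · simp [hib, hjb, hab, hab.symm, e2, kelmans_row_b A a b hA hab hba hba', hA.2 b]
          ring
        · rcases hA.1 a j with h1 | h1 <;> rcases hA.1 b j with h2 | h2 <;>
            norm_num [kelmansG, hib, hja, hjb, hab, hab.symm, Ne.symm hjb, h1, h2] <;> ring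
    · by_cases hja : j = a
      · rcases hA.1 i a with h1 | h1 <;> rcases hA.1 i b with h2 | h2 <;>
          norm_num [kelmansG, hia, hib, hja, hab, h1, h2] <;> ring
      · by_cases hjb : j = b
        · rcases hA.1 i a with h1 | h1 <;> rcases hA.1 i b with h2 | h2 <;>
            norm_num [kelmansG, hia, hib, hjb, hab, h1, h2] <;> ring
        · by_cases hij : i = j
          · subst hij
            have e5 : kelmansG A a b i i = A i i := by simp [kelmansG, hia, hib]
            simp [hia, hib, e5, kelmans_row_other A a b hA hab i hia hib]
          · simp [kelmansG, hia, hib, hja, hjb, hij]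
end

section
/- Let G be a mixed graph with distinct vertices a, b having no arc between them, and let G_b^a be the Kelmans transformation from b to a. Then in dictionary (lexicographic) order on descending degree sequences, the degree sequence of G_b^a is at least that of G. -/
attribute [local instance] Classical.propDecidable

/-- The degree of a vertex of a mixed graph: `|N⁺(u)| + |N⁻(u)|`. -/
noncomputable def mixedDeg {n : ℕ} (A : Matrix (Fin n) (Fin n) ℝ) (u : Fin n) : ℕ :=
  (Finset.univ.filter fun v => A u v = 1).card + (Finset.univ.filter fun v => A v u = 1).card

/-- The degree sequence of a mixed graph, listed in descending order. -/
noncomputable def degSeq {n : ℕ} (A : Matrix (Fin n) (Fin n) ℝ) : List ℕ :=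
  (Multiset.sort (Finset.univ.val.map fun u => mixedDeg A u) (· ≤ ·)).reverse


/-! ### Auxiliary lemmas -/

private theorem le_of_notmem_cons {T : Multiset ℕ} {y : ℕ} {L : Multiset ℕ}
    (h : T ≤ y ::ₘ L) (hy : y ∉ T) : T ≤ L := by
  rw [Multiset.le_iff_count] at *
  intro z
  by_cases hz : z = y
  · subst hz; simp [Multiset.count_eq_zero_of_notMem hy]
  · have := h z; rwa [Multiset.count_cons_of_ne hz] at this

/-- The top-`k` prefix of a descending sorted list has the largest sum among all
sub-multisets of size at most `k`. -/
private theorem topk : ∀ (k : ℕ) (s : List ℕ), s.Pairwise (· ≥ ·) → ∀ S : Multiset ℕ,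
    S ≤ ↑s → Multiset.card S ≤ k → S.sum ≤ (s.take k).sum := by
  intro k
  induction k with
  | zero =>
    intro s _ S _ hc
    have : S = 0 := Multiset.card_eq_zero.mp (Nat.le_zero.mp hc)
    simp [this]
  | succ k ih =>
    intro s hs S hS hc
    cases s with
    | nil =>
      have : S = 0 := Multiset.le_zero.mp (by simpa using hS)
      simp [this]
    | cons hd rest =>
      rcases eq_or_ne S 0 with rfl | hne
      · simp
      obtain ⟨z, hz⟩ := Multiset.exists_mem_of_ne_zero hne
      rw [← Multiset.cons_coe] at hS
      have hrest : rest.Pairwise (· ≥ ·) := hs.of_cons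
      rw [List.take_succ_cons, List.sum_cons]
      by_cases hh : hd ∈ S
      · have h1 : S.erase hd ≤ ↑rest := by
          have := Multiset.erase_le_erase hd hS
          rwa [Multiset.erase_cons_head] at this
        have h2 : Multiset.card (S.erase hd) ≤ k := by
          rw [Multiset.card_erase_of_mem hh]; exact Nat.pred_le_pred hc
        have h3 : S.sum = hd + (S.erase hd).sum := by
          conv_lhs => rw [← Multiset.cons_erase hh]
          simp
        rw [h3]
        exact Nat.add_le_add_left (ih rest hrest _ h1 h2) hd
      · have hzh : z ≠ hd := fun e => hh (e ▸ hz)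
        have hzrest : z ∈ rest := by
          have := Multiset.mem_of_le hS hz
          rcases Multiset.mem_cons.mp this with e | e
          · exact absurd e hzh
          · exact Multiset.mem_coe.mp e
        have hzle : z ≤ hd := (List.pairwise_cons.mp hs).1 z hzrest
        have h1 : S.erase z ≤ ↑rest := by
          rw [Multiset.le_iff_count]
          intro w
          by_cases hw : w = hd
          · have : Multiset.count w (S.erase z) = 0 := by
              apply Multiset.count_eq_zero_of_notMem
              intro hm; exact hh (hw ▸ Multiset.mem_of_mem_erase hm)
            simp [this]
          · calc Multiset.count w (S.erase z) ≤ Multiset.count w S :=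
                  Multiset.count_le_of_le w (Multiset.erase_le z S)
              _ ≤ Multiset.count w (hd ::ₘ ↑rest) := Multiset.count_le_of_le w hS
              _ = Multiset.count w (↑rest : Multiset ℕ) := Multiset.count_cons_of_ne hw _
        have h2 : Multiset.card (S.erase z) ≤ k := by
          rw [Multiset.card_erase_of_mem hz]
          exact Nat.pred_le_pred hc
        have h3 : S.sum = z + (S.erase z).sum := by
          conv_lhs => rw [← Multiset.cons_erase hz]
          simp
        rw [h3]
        exact Nat.add_le_add hzle (ih rest hrest _ h1 h2)

/-- Prefix sums only grow when two elements `x, y` are replaced by `x', y'` with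
`x' ≥ x ≥ y` and the same total. -/
private theorem takeSum (s t : List ℕ) (ht : t.Pairwise (· ≥ ·)) (L : Multiset ℕ) (x y x' y' : ℕ)
    (hs : (↑s : Multiset ℕ) = x ::ₘ y ::ₘ L) (htm : (↑t : Multiset ℕ) = x' ::ₘ y' ::ₘ L)
    (hyx : y ≤ x) (hxx : x ≤ x') (hsum : x + y = x' + y') (k : ℕ) :
    (s.take k).sum ≤ (t.take k).sum := by
  set S0 : Multiset ℕ := ↑(s.take k) with hS0def
  have hS0 : S0 ≤ x ::ₘ y ::ₘ L := by
    rw [← hs]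
    exact Multiset.coe_le.mpr (s.take_sublist k).subperm
  have hcard0 : Multiset.card S0 ≤ k := by
    simp only [hS0def, Multiset.coe_card, List.length_take]
    exact min_le_left _ _
  have hsum0 : S0.sum = (s.take k).sum := by simp [hS0def]
  have key : ∃ S1 : Multiset ℕ, S1 ≤ x' ::ₘ y' ::ₘ L ∧ Multiset.card S1 ≤ k ∧ S0.sum ≤ S1.sum := by
    by_cases hx : x ∈ S0
    · by_cases hy : y ∈ S0.erase x
      · refine ⟨x' ::ₘ y' ::ₘ (S0.erase x).erase y, ?_, ?_, ?_⟩
        · have h1 : S0.erase x ≤ y ::ₘ L := by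
            have := Multiset.erase_le_erase x hS0
            rwa [Multiset.erase_cons_head] at this
          have h2 : (S0.erase x).erase y ≤ L := by
            have := Multiset.erase_le_erase y h1
            rwa [Multiset.erase_cons_head] at this
          exact Multiset.cons_le_cons _ (Multiset.cons_le_cons _ h2)
        · have e1 : Multiset.card S0 = 2 + Multiset.card ((S0.erase x).erase y) := by
            rw [← Multiset.cons_erase hx, ← Multiset.cons_erase hy]
            simp; ring
          simp only [Multiset.card_cons]
          omega
        · have e1 : S0.sum = x + y + ((S0.erase x).erase y).sum := by
            conv_lhs => rw [← Multiset.cons_erase hx, ← Multiset.cons_erase hy]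
            simp [add_assoc]
          rw [e1]
          simp [← add_assoc, ← hsum]
      · refine ⟨x' ::ₘ S0.erase x, ?_, ?_, ?_⟩
        · have h1 : S0.erase x ≤ y ::ₘ L := by
            have := Multiset.erase_le_erase x hS0
            rwa [Multiset.erase_cons_head] at this
          have h2 : S0.erase x ≤ L := le_of_notmem_cons h1 hy
          exact Multiset.cons_le_cons _ (le_trans h2 (Multiset.le_cons_self _ _))
        · have h5 := congrArg Multiset.card (Multiset.cons_erase hx)
          simp only [Multiset.card_cons] at h5 ⊢
          omega
        · conv_lhs => rw [← Multiset.cons_erase hx]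
          simp only [Multiset.sum_cons]
          exact Nat.add_le_add_right hxx _
    · by_cases hy : y ∈ S0
      · refine ⟨x' ::ₘ S0.erase y, ?_, ?_, ?_⟩
        · have h1 : S0.erase y ≤ x ::ₘ L := by
            have := Multiset.erase_le_erase y hS0
            rwa [Multiset.cons_swap, Multiset.erase_cons_head] at this
          have hx' : x ∉ S0.erase y := fun hm => hx (Multiset.mem_of_mem_erase hm)
          have h2 : S0.erase y ≤ L := le_of_notmem_cons h1 hx'
          exact Multiset.cons_le_cons _ (le_trans h2 (Multiset.le_cons_self _ _))
        · have h5 := congrArg Multiset.card (Multiset.cons_erase hy)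
          simp only [Multiset.card_cons] at h5 ⊢
          omega
        · conv_lhs => rw [← Multiset.cons_erase hy]
          simp only [Multiset.sum_cons]
          exact Nat.add_le_add_right (le_trans hyx hxx) _
      · have h1 : S0 ≤ y ::ₘ L := le_of_notmem_cons hS0 hx
        have h2 : S0 ≤ L := le_of_notmem_cons h1 hy
        exact ⟨S0, le_trans h2 (le_trans (Multiset.le_cons_self _ _) (Multiset.le_cons_self _ _)),
          hcard0, le_refl _⟩
  obtain ⟨S1, hle, hc1, hs1⟩ := key
  calc (s.take k).sum = S0.sum := hsum0.symm
    _ ≤ S1.sum := hs1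
    _ ≤ (t.take k).sum := topk k t ht S1 (htm ▸ hle) hc1

/-- Prefix-sum domination implies equality or strict lexicographic order. -/
private theorem lexA : ∀ (s t : List ℕ), s.length = t.length →
    (∀ k, (s.take k).sum ≤ (t.take k).sum) → s = t ∨ List.Lex (· < ·) s t := by
  intro s
  induction s with
  | nil => intro t hl _; left; exact (List.length_eq_zero_iff.mp hl.symm).symm
  | cons a s ih =>
    intro t hl hk
    cases t with
    | nil => simp at hl
    | cons b t =>
      have h1 := hk 1
      simp at h1
      rcases lt_or_eq_of_le h1 with h | h
      · right; exact List.Lex.rel h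
      · subst h
        have := ih t (by simpa using hl) (fun k => by have := hk (k+1); simpa using this)
        rcases this with h | h
        · left; rw [h]
        · right; exact List.Lex.cons h

/-- A 0-1 counter. -/
private noncomputable def cnt (x : ℝ) : ℕ := if x = 1 then 1 else 0

private lemma cnt_zero : cnt 0 = 0 := by norm_num [cnt]

private lemma cnt_max_min {p q : ℝ} (hp : p = 0 ∨ p = 1) (hq : q = 0 ∨ q = 1) :
    cnt (max p q) + cnt (min p q) = cnt p + cnt q := by
  rcases hp with rfl | rfl <;> rcases hq with rfl | rfl <;>
    norm_num [cnt, max_def, min_def]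

private lemma cnt_le_max_left {p q : ℝ} (hp : p = 0 ∨ p = 1) (hq : q = 0 ∨ q = 1) :
    cnt p ≤ cnt (max p q) := by
  rcases hp with rfl | rfl <;> rcases hq with rfl | rfl <;>
    norm_num [cnt, max_def]

private lemma cnt_le_max_right {p q : ℝ} (hp : p = 0 ∨ p = 1) (hq : q = 0 ∨ q = 1) :
    cnt q ≤ cnt (max p q) := by
  rcases hp with rfl | rfl <;> rcases hq with rfl | rfl <;>
    norm_num [cnt, max_def]

private lemma mixedDeg_eq {n : ℕ} (A : Matrix (Fin n) (Fin n) ℝ) (u : Fin n) :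
    mixedDeg A u = (∑ v, cnt (A u v)) + (∑ v, cnt (A v u)) := by
  unfold mixedDeg cnt
  rw [Finset.card_filter, Finset.card_filter]

private lemma sum_split {n : ℕ} (a b : Fin n) (hab : a ≠ b) (f : Fin n → ℕ) :
    ∑ v, f v = f a + f b + ∑ v ∈ (Finset.univ.erase a).erase b, f v := by
  rw [← Finset.add_sum_erase _ f (Finset.mem_univ a),
    ← Finset.add_sum_erase _ f (Finset.mem_erase.mpr ⟨hab.symm, Finset.mem_univ b⟩)]
  ring

section entries
variable {n : ℕ} (A : Matrix (Fin n) (Fin n) ℝ) {a b : Fin n}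

private lemma kel_aa : kelmansG A a b a a = A a a := by simp [kelmansG]
private lemma kel_ab (hab : a ≠ b) : kelmansG A a b a b = A a b := by simp [kelmansG, hab]
private lemma kel_ba (hab : a ≠ b) : kelmansG A a b b a = A b a := by simp [kelmansG, hab.symm]
private lemma kel_bb (hab : a ≠ b) : kelmansG A a b b b = A b b := by simp [kelmansG, hab.symm]
private lemma kel_av {v : Fin n} (h1 : v ≠ a) (h2 : v ≠ b) :
    kelmansG A a b a v = max (A a v) (A b v) := by simp [kelmansG, h1, h2]
private lemma kel_bv (hab : a ≠ b) {v : Fin n} (h1 : v ≠ a) (h2 : v ≠ b) :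
    kelmansG A a b b v = min (A a v) (A b v) := by simp [kelmansG, h1, h2, hab.symm]
private lemma kel_va {v : Fin n} (h1 : v ≠ a) (h2 : v ≠ b) :
    kelmansG A a b v a = max (A v a) (A v b) := by simp [kelmansG, h1, h2]
private lemma kel_vb (hab : a ≠ b) {v : Fin n} (h1 : v ≠ a) (h2 : v ≠ b) :
    kelmansG A a b v b = min (A v a) (A v b) := by simp [kelmansG, h1, h2, hab.symm]
private lemma kel_vw {i j : Fin n} (hi1 : i ≠ a) (hi2 : i ≠ b) (hj1 : j ≠ a) (hj2 : j ≠ b) :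
    kelmansG A a b i j = A i j := by simp [kelmansG, hi1, hi2, hj1, hj2]

end entries

section degrees
variable {n : ℕ} {A : Matrix (Fin n) (Fin n) ℝ} {a b : Fin n}

private lemma memE {v : Fin n} (hv : v ∈ (Finset.univ.erase a).erase b) : v ≠ a ∧ v ≠ b := by
  rw [Finset.mem_erase, Finset.mem_erase] at hv
  exact ⟨hv.2.1, hv.1⟩

private lemma deg_other (hA : IsMixedAdj A) (hab : a ≠ b) {i : Fin n} (h1 : i ≠ a) (h2 : i ≠ b) :
    mixedDeg (kelmansG A a b) i = mixedDeg A i := by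
  rw [mixedDeg_eq, mixedDeg_eq,
    sum_split a b hab (fun v => cnt (kelmansG A a b i v)),
    sum_split a b hab (fun v => cnt (kelmansG A a b v i)),
    sum_split a b hab (fun v => cnt (A i v)),
    sum_split a b hab (fun v => cnt (A v i))]
  have hrow : ∑ v ∈ (Finset.univ.erase a).erase b, cnt (kelmansG A a b i v)
      = ∑ v ∈ (Finset.univ.erase a).erase b, cnt (A i v) :=
    Finset.sum_congr rfl fun v hv => by rw [kel_vw A h1 h2 (memE hv).1 (memE hv).2]
  have hcol : ∑ v ∈ (Finset.univ.erase a).erase b, cnt (kelmansG A a b v i)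
      = ∑ v ∈ (Finset.univ.erase a).erase b, cnt (A v i) :=
    Finset.sum_congr rfl fun v hv => by rw [kel_vw A (memE hv).1 (memE hv).2 h1 h2]
  rw [hrow, hcol, kel_va A h1 h2, kel_vb A hab h1 h2, kel_av A h1 h2, kel_bv A hab h1 h2,
    cnt_max_min (hA.1 i a) (hA.1 i b), cnt_max_min (hA.1 a i) (hA.1 b i)]

private lemma deg_sum (hA : IsMixedAdj A) (hab : a ≠ b) :
    mixedDeg (kelmansG A a b) a + mixedDeg (kelmansG A a b) b = mixedDeg A a + mixedDeg A b := by
  rw [mixedDeg_eq, mixedDeg_eq, mixedDeg_eq, mixedDeg_eq,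
    sum_split a b hab (fun v => cnt (kelmansG A a b a v)),
    sum_split a b hab (fun v => cnt (kelmansG A a b v a)),
    sum_split a b hab (fun v => cnt (kelmansG A a b b v)),
    sum_split a b hab (fun v => cnt (kelmansG A a b v b)),
    sum_split a b hab (fun v => cnt (A a v)),
    sum_split a b hab (fun v => cnt (A v a)),
    sum_split a b hab (fun v => cnt (A b v)),
    sum_split a b hab (fun v => cnt (A v b)),
    kel_aa, kel_ab A hab, kel_ba A hab, kel_bb A hab]
  have h1 : ∑ v ∈ (Finset.univ.erase a).erase b, cnt (kelmansG A a b a v)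
      = ∑ v ∈ (Finset.univ.erase a).erase b, cnt (max (A a v) (A b v)) :=
    Finset.sum_congr rfl fun v hv => by rw [kel_av A (memE hv).1 (memE hv).2]
  have h2 : ∑ v ∈ (Finset.univ.erase a).erase b, cnt (kelmansG A a b b v)
      = ∑ v ∈ (Finset.univ.erase a).erase b, cnt (min (A a v) (A b v)) :=
    Finset.sum_congr rfl fun v hv => by rw [kel_bv A hab (memE hv).1 (memE hv).2]
  have h3 : ∑ v ∈ (Finset.univ.erase a).erase b, cnt (kelmansG A a b v a)
      = ∑ v ∈ (Finset.univ.erase a).erase b, cnt (max (A v a) (A v b)) :=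
    Finset.sum_congr rfl fun v hv => by rw [kel_va A (memE hv).1 (memE hv).2]
  have h4 : ∑ v ∈ (Finset.univ.erase a).erase b, cnt (kelmansG A a b v b)
      = ∑ v ∈ (Finset.univ.erase a).erase b, cnt (min (A v a) (A v b)) :=
    Finset.sum_congr rfl fun v hv => by rw [kel_vb A hab (memE hv).1 (memE hv).2]
  rw [h1, h2, h3, h4]
  have hr : (∑ v ∈ (Finset.univ.erase a).erase b, cnt (max (A a v) (A b v)))
      + (∑ v ∈ (Finset.univ.erase a).erase b, cnt (min (A a v) (A b v)))
      = (∑ v ∈ (Finset.univ.erase a).erase b, cnt (A a v))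
      + (∑ v ∈ (Finset.univ.erase a).erase b, cnt (A b v)) := by
    rw [← Finset.sum_add_distrib, ← Finset.sum_add_distrib]
    exact Finset.sum_congr rfl fun v _ => cnt_max_min (hA.1 a v) (hA.1 b v)
  have hc : (∑ v ∈ (Finset.univ.erase a).erase b, cnt (max (A v a) (A v b)))
      + (∑ v ∈ (Finset.univ.erase a).erase b, cnt (min (A v a) (A v b)))
      = (∑ v ∈ (Finset.univ.erase a).erase b, cnt (A v a))
      + (∑ v ∈ (Finset.univ.erase a).erase b, cnt (A v b)) := by
    rw [← Finset.sum_add_distrib, ← Finset.sum_add_distrib]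
    exact Finset.sum_congr rfl fun v _ => cnt_max_min (hA.1 v a) (hA.1 v b)
  omega

private lemma deg_a_ge (hA : IsMixedAdj A) (hab : a ≠ b) :
    mixedDeg A a ≤ mixedDeg (kelmansG A a b) a := by
  rw [mixedDeg_eq, mixedDeg_eq,
    sum_split a b hab (fun v => cnt (kelmansG A a b a v)),
    sum_split a b hab (fun v => cnt (kelmansG A a b v a)),
    sum_split a b hab (fun v => cnt (A a v)),
    sum_split a b hab (fun v => cnt (A v a)),
    kel_aa, kel_ab A hab, kel_ba A hab]
  have h1 : ∑ v ∈ (Finset.univ.erase a).erase b, cnt (A a v)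
      ≤ ∑ v ∈ (Finset.univ.erase a).erase b, cnt (kelmansG A a b a v) :=
    Finset.sum_le_sum fun v hv => by
      rw [kel_av A (memE hv).1 (memE hv).2]
      exact cnt_le_max_left (hA.1 a v) (hA.1 b v)
  have h3 : ∑ v ∈ (Finset.univ.erase a).erase b, cnt (A v a)
      ≤ ∑ v ∈ (Finset.univ.erase a).erase b, cnt (kelmansG A a b v a) :=
    Finset.sum_le_sum fun v hv => by
      rw [kel_va A (memE hv).1 (memE hv).2]
      exact cnt_le_max_left (hA.1 v a) (hA.1 v b)
  omega

private lemma deg_b_ge (hA : IsMixedAdj A) (hab : a ≠ b) (hnoarc : A a b = A b a) :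
    mixedDeg A b ≤ mixedDeg (kelmansG A a b) a := by
  rw [mixedDeg_eq, mixedDeg_eq,
    sum_split a b hab (fun v => cnt (kelmansG A a b a v)),
    sum_split a b hab (fun v => cnt (kelmansG A a b v a)),
    sum_split a b hab (fun v => cnt (A b v)),
    sum_split a b hab (fun v => cnt (A v b)),
    kel_aa, kel_ab A hab, kel_ba A hab]
  have h1 : ∑ v ∈ (Finset.univ.erase a).erase b, cnt (A b v)
      ≤ ∑ v ∈ (Finset.univ.erase a).erase b, cnt (kelmansG A a b a v) :=
    Finset.sum_le_sum fun v hv => by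
      rw [kel_av A (memE hv).1 (memE hv).2]
      exact cnt_le_max_right (hA.1 a v) (hA.1 b v)
  have h3 : ∑ v ∈ (Finset.univ.erase a).erase b, cnt (A v b)
      ≤ ∑ v ∈ (Finset.univ.erase a).erase b, cnt (kelmansG A a b v a) :=
    Finset.sum_le_sum fun v hv => by
      rw [kel_va A (memE hv).1 (memE hv).2]
      exact cnt_le_max_right (hA.1 v a) (hA.1 v b)
  have e1 : cnt (A a b) = cnt (A b a) := by rw [hnoarc]
  have e2 : cnt (A a a) = 0 := by rw [hA.2 a, cnt_zero]
  have e3 : cnt (A b b) = 0 := by rw [hA.2 b, cnt_zero]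
  omega

end degrees

/-- In dictionary order on descending degree sequences, `d(G_b^a) ≥ d(G)`. -/
theorem degSeq_le_degSeq_kelmansG {n : ℕ} (A : Matrix (Fin n) (Fin n) ℝ) (hA : IsMixedAdj A)
    (a b : Fin n) (hab : a ≠ b) (hnoarc : A a b = A b a) :
    degSeq (kelmansG A a b) = degSeq A ∨
      List.Lex (· < ·) (degSeq A) (degSeq (kelmansG A a b)) := by
  set M0 := ((Finset.univ.val : Multiset (Fin n)).erase a).erase b with hM0
  set L := M0.map (mixedDeg A) with hL
  have ha : a ∈ (Finset.univ.val : Multiset (Fin n)) := Finset.mem_univ a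
  have hb : b ∈ (Finset.univ.val : Multiset (Fin n)).erase a :=
    (Multiset.mem_erase_of_ne hab.symm).mpr (Finset.mem_univ b)
  have hu : (Finset.univ.val : Multiset (Fin n)) = a ::ₘ b ::ₘ M0 := by
    rw [Multiset.cons_erase hb, Multiset.cons_erase ha]
  have hmem : ∀ i ∈ M0, i ≠ a ∧ i ≠ b := by
    intro i hi
    have hnd : ((Finset.univ.val : Multiset (Fin n)).erase a).Nodup :=
      Finset.univ.nodup.erase a
    have h1 := (Multiset.Nodup.mem_erase_iff hnd).mp hi
    have h2 := (Multiset.Nodup.mem_erase_iff Finset.univ.nodup).mp h1.2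
    exact ⟨h2.1, h1.1⟩
  have hmapA : (Finset.univ.val : Multiset (Fin n)).map (mixedDeg A)
      = mixedDeg A a ::ₘ mixedDeg A b ::ₘ L := by
    rw [hu, Multiset.map_cons, Multiset.map_cons]
  have hmapA' : (Finset.univ.val : Multiset (Fin n)).map (mixedDeg (kelmansG A a b))
      = mixedDeg (kelmansG A a b) a ::ₘ mixedDeg (kelmansG A a b) b ::ₘ L := by
    rw [hu, Multiset.map_cons, Multiset.map_cons]
    congr 1
    congr 1
    rw [hL]
    exact Multiset.map_congr rfl fun i hi => deg_other hA hab (hmem i hi).1 (hmem i hi).2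
  have hsA : (↑(degSeq A) : Multiset ℕ) = (Finset.univ.val : Multiset (Fin n)).map (mixedDeg A) := by
    unfold degSeq
    rw [Multiset.coe_reverse, Multiset.sort_eq]
  have hsA' : (↑(degSeq (kelmansG A a b)) : Multiset ℕ)
      = (Finset.univ.val : Multiset (Fin n)).map (mixedDeg (kelmansG A a b)) := by
    unfold degSeq
    rw [Multiset.coe_reverse, Multiset.sort_eq]
  have hsort : (degSeq (kelmansG A a b)).Pairwise (· ≥ ·) := by
    unfold degSeq
    have h0 := Multiset.pairwise_sort
      ((Finset.univ.val : Multiset (Fin n)).map fun u => mixedDeg (kelmansG A a b) u) (· ≤ ·)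
    exact List.pairwise_reverse.mpr h0
  have hlen : (degSeq A).length = (degSeq (kelmansG A a b)).length := by
    simp [degSeq]
  have hdsum := deg_sum hA hab
  have main : ∀ x y : ℕ, (↑(degSeq A) : Multiset ℕ) = x ::ₘ y ::ₘ L → y ≤ x →
      x ≤ mixedDeg (kelmansG A a b) a →
      x + y = mixedDeg (kelmansG A a b) a + mixedDeg (kelmansG A a b) b →
      degSeq (kelmansG A a b) = degSeq A ∨
        List.Lex (· < ·) (degSeq A) (degSeq (kelmansG A a b)) := by
    intro x y hxy hyx hxx hsum
    have htake := takeSum (degSeq A) (degSeq (kelmansG A a b)) hsort L x y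
      (mixedDeg (kelmansG A a b) a) (mixedDeg (kelmansG A a b) b)
      hxy (hsA'.trans hmapA') hyx hxx hsum
    rcases lexA (degSeq A) (degSeq (kelmansG A a b)) hlen htake with h | h
    · exact Or.inl h.symm
    · exact Or.inr h
  rcases le_total (mixedDeg A b) (mixedDeg A a) with h | h
  · exact main _ _ (hsA.trans hmapA) h (deg_a_ge hA hab) (by omega)
  · refine main (mixedDeg A b) (mixedDeg A a) ?_ h (deg_b_ge hA hab hnoarc) (by omega)
    exact (hsA.trans hmapA).trans (Multiset.cons_swap _ _ _)
end

section
/- Let T be a mixed tree of order n and size m with A_α matrix A_α(T) = αD⁺ + (1−α)A for α ∈ [0,1], and let C₁, ..., C_t (t = 2n−m−1) be the vertex sets of the components of T obtained by deleting all arcs. Then the characteristic polynomial of A_α(T) factors as the product over i of the characteristic polynomials of the principal submatrices A_α(T)[C_i]. -/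
attribute [local instance] Classical.propDecidable

noncomputable def wgt {n : ℕ} (A : Matrix (Fin n) (Fin n) ℝ) (u v : Fin n) : ℤ :=
  (if A u v = 1 then 1 else 0) - (if A v u = 1 then 1 else 0)

noncomputable def wsum {n : ℕ} (A : Matrix (Fin n) (Fin n) ℝ) :
    ∀ {u v : Fin n}, (underlying A).Walk u v → ℤ
  | _, _, SimpleGraph.Walk.nil => 0
  | u, _, SimpleGraph.Walk.cons (v := x) _ p => wgt A u x + wsum A p

lemma wsum_append {n : ℕ} (A : Matrix (Fin n) (Fin n) ℝ) {u v w : Fin n}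
    (p : (underlying A).Walk u v) (q : (underlying A).Walk v w) :
    wsum A (p.append q) = wsum A p + wsum A q := by
  induction p with
  | nil => simp [wsum]
  | cons h p ih => simp [wsum, ih]; ring

lemma wsum_concat {n : ℕ} (A : Matrix (Fin n) (Fin n) ℝ) {u v w : Fin n}
    (p : (underlying A).Walk u v) (h : (underlying A).Adj v w) :
    wsum A (p.concat h) = wsum A p + wgt A v w := by
  rw [SimpleGraph.Walk.concat_eq_append, wsum_append]
  simp [wsum]

lemma wgt_antisymm {n : ℕ} (A : Matrix (Fin n) (Fin n) ℝ) (u v : Fin n) :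
    wgt A u v = - wgt A v u := by
  unfold wgt; ring

noncomputable def pot {n : ℕ} (A : Matrix (Fin n) (Fin n) ℝ)
    (ht : (underlying A).IsTree) (r v : Fin n) : ℤ :=
  wsum A (ht.existsUnique_path r v).choose

lemma pot_adj {n : ℕ} (A : Matrix (Fin n) (Fin n) ℝ) (ht : (underlying A).IsTree)
    (r : Fin n) {u v : Fin n} (h : (underlying A).Adj u v) :
    pot A ht r v = pot A ht r u + wgt A u v := by
  set p := (ht.existsUnique_path r u).choose with hpdef
  have hp : p.IsPath := (ht.existsUnique_path r u).choose_spec.1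
  by_cases hv : v ∈ p.support
  · have hdrop : p.dropUntil v hv = SimpleGraph.Walk.cons h.symm SimpleGraph.Walk.nil := by
      refine (ht.existsUnique_path v u).unique (hp.dropUntil hv) ?_
      rw [SimpleGraph.Walk.cons_isPath_iff]
      exact ⟨SimpleGraph.Walk.IsPath.nil, by simp [h.ne']⟩
    have htake : (ht.existsUnique_path r v).choose = p.takeUntil v hv :=
      (ht.existsUnique_path r v).unique (ht.existsUnique_path r v).choose_spec.1
        (hp.takeUntil hv)
    have hsplit : wsum A p = wsum A (p.takeUntil v hv) + wsum A (p.dropUntil v hv) := by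
      conv_lhs => rw [← SimpleGraph.Walk.take_spec p hv]
      rw [wsum_append]
    rw [hdrop] at hsplit
    simp only [wsum] at hsplit
    have hanti := wgt_antisymm A u v
    unfold pot
    rw [htake, ← hpdef]
    omega
  · have hq : (p.concat h).IsPath := by
      rw [← SimpleGraph.Walk.isPath_reverse_iff, SimpleGraph.Walk.reverse_concat,
        SimpleGraph.Walk.cons_isPath_iff]
      exact ⟨hp.reverse, by simpa using hv⟩
    have : (ht.existsUnique_path r v).choose = p.concat h :=
      (ht.existsUnique_path r v).unique (ht.existsUnique_path r v).choose_spec.1 hq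
    unfold pot
    rw [this, ← hpdef, wsum_concat]

/-- The characteristic polynomial of `A_α(T)` of a mixed tree factors as the product of the
characteristic polynomials of the principal submatrices on the components obtained by
deleting all arcs. -/
theorem charpoly_Aalpha_eq_prod_components {n : ℕ} (α : ℝ) (hα : α ∈ Set.Icc (0:ℝ) 1)
    (A : Matrix (Fin n) (Fin n) ℝ) (hA : IsMixedAdj A) (htree : (underlying A).IsTree) :
    (Aalpha α A).charpoly =
      ∏ c ∈ Finset.univ.image (undirPart A).connectedComponentMk,
        ((Aalpha α A).submatrix
          (fun i : {v // (undirPart A).connectedComponentMk v = c} => (i : Fin n))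
          (fun j : {v // (undirPart A).connectedComponentMk v = c} => (j : Fin n))).charpoly := by
  obtain ⟨r⟩ := htree.isConnected.nonempty
  set G := undirPart A with hG
  set f : Fin n → ℤ := pot A htree r with hf
  have hGadj : ∀ u v : Fin n, G.Adj u v → f u = f v := by
    rintro u v ⟨hne, h1, h2⟩
    have hadj : (underlying A).Adj u v := ⟨hne, Or.inl h1⟩
    have hp := pot_adj A htree r hadj
    have hw : wgt A u v = 0 := by simp [wgt, h1, h2]
    rw [hf]; omega
  have hwalk0 : ∀ (u v : Fin n) (p : G.Walk u v), f u = f v := by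
    intro u v p
    induction p with
    | nil => rfl
    | cons h p ih => exact (hGadj _ _ h).trans ih
  have hwalk : ∀ (u v : Fin n) (p : G.Walk u v), p.IsPath → f u = f v :=
    fun u v p _ => hwalk0 u v p
  set F := SimpleGraph.ConnectedComponent.lift f hwalk with hFdef
  set k := Fintype.card G.ConnectedComponent with hk
  set e : G.ConnectedComponent ≃ Fin k := Fintype.equivFin _ with he
  set g : G.ConnectedComponent → Lex (ℤ × Fin k) := fun c => toLex (F c, e c) with hg
  set b : Fin n → Lex (ℤ × Fin k) := fun v => g (G.connectedComponentMk v) with hb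
  have hfF : ∀ v : Fin n, F (G.connectedComponentMk v) = f v := fun v => rfl
  have hginj : Function.Injective g := by
    intro c d hcd
    have h2 : (F c, e c) = (F d, e d) := congrArg ofLex hcd
    exact e.injective (congrArg Prod.snd h2)
  have harc : ∀ u v : Fin n, A u v = 1 → A v u ≠ 1 → f u < f v := by
    intro u v h1 h2
    have hne : u ≠ v := by
      rintro rfl; rw [hA.2 u] at h1; norm_num at h1
    have hadj : (underlying A).Adj u v := ⟨hne, Or.inl h1⟩
    have hp := pot_adj A htree r hadj
    have hw : wgt A u v = 1 := by simp [wgt, h1, h2]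
    rw [hf]; omega
  have hbt : (Aalpha α A).BlockTriangular b := by
    intro i j hlt
    by_contra hne0
    have hij : i ≠ j := by rintro rfl; exact lt_irrefl _ hlt
    have hAij : A i j = 1 := by
      rcases hA.1 i j with h0 | h1
      · exact absurd (by simp [Aalpha, Matrix.diagonal_apply_ne _ hij, h0]) hne0
      · exact h1
    rcases hA.1 j i with h0 | h1
    · have hfij := harc i j hAij (by rw [h0]; norm_num)
      rcases (Prod.Lex.lt_iff).mp hlt with hlt1 | ⟨hlt1, _⟩ <;>
        · simp only [hb, hg, ofLex_toLex, hfF] at hlt1; omega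
    · have hadjG : G.Adj i j := ⟨hij, hAij, h1⟩
      have hcc : G.connectedComponentMk i = G.connectedComponentMk j :=
        SimpleGraph.ConnectedComponent.connectedComponentMk_eq_of_adj hadjG
      have hbij : b i = b j := by rw [hb]; simp only; rw [hcc]
      rw [hbij] at hlt; exact lt_irrefl _ hlt
  rw [hbt.charpoly]
  letI : DecidableEq (Lex (ℤ × Fin k)) := LinearOrder.toDecidableEq
  have himg : Finset.univ.image b = (Finset.univ.image G.connectedComponentMk).image g := by
    rw [Finset.image_image]; rfl
  rw [himg, Finset.prod_image (fun x _ y _ h => hginj h)]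
  refine Finset.prod_congr rfl ?_
  intro c hc
  have hiff : ∀ v : Fin n, b v = g c ↔ G.connectedComponentMk v = c := fun v =>
    ⟨fun h => hginj h, fun h => by rw [hb]; simp only; rw [h]⟩
  let ee : {v // b v = g c} ≃ {v // G.connectedComponentMk v = c} := Equiv.subtypeEquivRight hiff
  rw [← Matrix.charpoly_reindex ee ((Aalpha α A).toSquareBlock b (g c))]
  congr 1
end

section
/- Let S be a mixed star of order n, size m, in which the center vertex 1 has out-degree m−n+k+1 for some 0 ≤ k ≤ 2n−m−2, with the m−n+1 undirected edges joining the center to vertices 2,...,m−n+2, arcs from the center to vertices m−n+3,...,m−n+k+2, and arcs from each remaining vertex to the center. Then for α ∈ [0,1], the A_α-spectral radius ρ_α(S) is the larger root of the quadratic (λ − α)(λ − α(m−n+k+1)) − (1−α)²(m−n+1). -/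
attribute [local instance] Classical.propDecidable

/-- The mixed star of order `n` and size `m` with center `0`: the `m-n+1` undirected edges
join the center to vertices `1, …, m-n+1`, there are arcs from the center to vertices
`m-n+2, …, m-n+k+1`, and arcs from every remaining vertex to the center.
(Here vertices are `0`-indexed, so vertex `i` is the paper's vertex `i+1`.) -/
noncomputable def starMat (n m k : ℕ) : Matrix (Fin n) (Fin n) ℝ :=
  Matrix.of fun i j =>
    if i.val = 0 ∧ 1 ≤ j.val ∧ j.val ≤ m - (n - 1) + k then 1
    else if j.val = 0 ∧ 1 ≤ i.val ∧ (i.val ≤ m - (n - 1) ∨ m - (n - 1) + k + 1 ≤ i.val) then 1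
    else 0

lemma my_isRoot_iff_eigen {N : ℕ} (M : Matrix (Fin N) (Fin N) ℂ) (μ : ℂ) :
    M.charpoly.IsRoot μ ↔ ∃ v, v ≠ 0 ∧ M.mulVec v = μ • v := by
  have h2 : (Matrix.charmatrix M).map (Polynomial.eval μ)
      = μ • (1 : Matrix (Fin N) (Fin N) ℂ) - M := by
    ext i j
    by_cases h : i = j
    · subst h
      simp [Matrix.charmatrix_apply_eq, Matrix.one_apply]
    · simp [Matrix.charmatrix_apply_ne _ _ _ h, Matrix.one_apply_ne h]
  have h1 : M.charpoly.IsRoot μ ↔ (μ • (1 : Matrix (Fin N) (Fin N) ℂ) - M).det = 0 := by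
    rw [Polynomial.IsRoot, Matrix.charpoly, ← h2, ← Polynomial.coe_evalRingHom,
      RingHom.map_det, RingHom.mapMatrix_apply]
  rw [h1, ← Matrix.exists_mulVec_eq_zero_iff]
  constructor
  · rintro ⟨v, hv, hmv⟩
    refine ⟨v, hv, ?_⟩
    rw [Matrix.sub_mulVec, Matrix.smul_mulVec, Matrix.one_mulVec, sub_eq_zero] at hmv
    exact hmv.symm
  · rintro ⟨v, hv, hmv⟩
    refine ⟨v, hv, ?_⟩
    rw [Matrix.sub_mulVec, Matrix.smul_mulVec, Matrix.one_mulVec, hmv, sub_self]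

lemma sra_card (n a : ℕ) (h : a ≤ n - 1) :
    ((Finset.univ : Finset (Fin n)).filter (fun j => 1 ≤ j.val ∧ j.val ≤ a)).card = a := by
  have h2 : ((Finset.univ : Finset (Fin n)).filter (fun j => 1 ≤ j.val ∧ j.val ≤ a)).card
      = (Finset.Icc 1 a).card := by
    apply Finset.card_bij (fun j _ => j.val)
    · intro j hj
      simp only [Finset.mem_filter, Finset.mem_univ, true_and] at hj
      simp only [Finset.mem_Icc]
      omega
    · intro j1 h1 j2 h2 hv
      exact Fin.ext hv
    · intro x hx
      simp only [Finset.mem_Icc] at hx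
      have hxn : x < n := by omega
      refine ⟨⟨x, hxn⟩, ?_, rfl⟩
      simp only [Finset.mem_filter, Finset.mem_univ, true_and]
      exact hx
  rw [h2, Nat.card_Icc]
  omega

lemma sra_rowsum {n m k : ℕ} (hd : m - (n-1) + k ≤ n - 1) (i : Fin n) :
    ∑ j, starMat n m k i j =
      if i.val = 0 then ((m - (n-1) + k : ℕ) : ℝ)
      else if (i.val ≤ m - (n-1) ∨ m - (n-1) + k + 1 ≤ i.val) then 1 else 0 := by
  set t := m - (n - 1) with ht
  by_cases hi : i.val = 0
  · have hA : ∀ j : Fin n, starMat n m k i j = if 1 ≤ j.val ∧ j.val ≤ t + k then 1 else 0 := by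
      intro j
      simp only [starMat, Matrix.of_apply, ← ht]
      split_ifs <;> first | rfl | omega
    rw [Finset.sum_congr rfl (fun j _ => hA j), Finset.sum_boole, sra_card n (t+k) hd, if_pos hi]
  · have hA : ∀ j : Fin n, starMat n m k i j =
        if j.val = 0 ∧ (i.val ≤ t ∨ t + k + 1 ≤ i.val) then 1 else 0 := by
      intro j
      simp only [starMat, Matrix.of_apply, ← ht]
      split_ifs <;> first | rfl | omega
    rw [Finset.sum_congr rfl (fun j _ => hA j), if_neg hi]
    by_cases hc : (i.val ≤ t ∨ t + k + 1 ≤ i.val)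
    · have hn0 : 0 < n := i.pos
      rw [if_pos hc]
      have : ∀ j : Fin n, (if j.val = 0 ∧ (i.val ≤ t ∨ t + k + 1 ≤ i.val) then (1:ℝ) else 0)
          = if j = (⟨0, hn0⟩ : Fin n) then 1 else 0 := by
        intro j
        by_cases hj : j = (⟨0, hn0⟩ : Fin n)
        · subst hj; rw [if_pos ⟨rfl, hc⟩, if_pos rfl]
        · rw [if_neg (fun h => hj (Fin.ext h.1)), if_neg hj]
      rw [Finset.sum_congr rfl (fun j _ => this j), Finset.sum_ite_eq' Finset.univ _ (fun _ => (1:ℝ))]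
      simp
    · rw [if_neg hc]
      rw [Finset.sum_congr rfl (fun j _ => by rw [if_neg (by tauto)]), Finset.sum_const_zero]

lemma sra_apply {n m k : ℕ} (α : ℝ) (hd : m - (n-1) + k ≤ n - 1) (i j : Fin n) :
    Aalpha α (starMat n m k) i j =
      if i.val = 0 ∧ j.val = 0 then α * ((m - (n-1) + k : ℕ) : ℝ)
      else if i.val = 0 ∧ 1 ≤ j.val ∧ j.val ≤ m - (n-1) + k then (1-α)
      else if j.val = 0 ∧ (i.val ≤ m - (n-1) ∨ m - (n-1) + k + 1 ≤ i.val) then (1-α)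
      else if i = j ∧ (i.val ≤ m - (n-1) ∨ m - (n-1) + k + 1 ≤ i.val) then α
      else 0 := by
  have hdiag : Aalpha α (starMat n m k) i j
      = α * (if i = j then (∑ l, starMat n m k i l) else 0) + (1-α) * starMat n m k i j := by
    simp [Aalpha, Matrix.add_apply, Matrix.smul_apply, Matrix.diagonal_apply, smul_eq_mul]
  rw [hdiag, sra_rowsum hd i]
  simp only [starMat, Matrix.of_apply, Fin.ext_iff]
  split_ifs <;> first | ring1 | (exfalso; omega)

noncomputable def McM (n m k : ℕ) (α : ℝ) : Matrix (Fin n) (Fin n) ℂ :=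
  (Aalpha α (starMat n m k)).map (fun x => (x : ℂ))

lemma sra_mulVec0 {n m k : ℕ} (α : ℝ) (hn : 0 < n) (hd : m-(n-1)+k ≤ n-1) (v : Fin n → ℂ) :
    (McM n m k α).mulVec v ⟨0, hn⟩ =
      (α : ℂ) * ((m-(n-1)+k : ℕ) : ℂ) * v ⟨0, hn⟩ +
      (1 - (α:ℂ)) * ∑ j ∈ Finset.univ.filter (fun j : Fin n => 1 ≤ j.val ∧ j.val ≤ m-(n-1)+k),
        v j := by
  have hz0 : ((⟨0, hn⟩ : Fin n) : ℕ) = 0 := rfl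
  have hentry : ∀ j : Fin n, (McM n m k α) ⟨0, hn⟩ j =
      (if j.val = 0 then (α:ℂ) * ((m-(n-1)+k:ℕ):ℂ) else 0)
      + (if 1 ≤ j.val ∧ j.val ≤ m-(n-1)+k then (1 - (α:ℂ)) else 0) := by
    intro j
    rw [McM, Matrix.map_apply, sra_apply α hd]
    simp only [apply_ite (fun x : ℝ => (x:ℂ)), Complex.ofReal_mul, Complex.ofReal_natCast,
      Complex.ofReal_sub, Complex.ofReal_one, Complex.ofReal_zero, Fin.ext_iff, hz0,
      true_and, and_true, eq_self_iff_true]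
    split_ifs <;> first | ring1 | (exfalso; omega)
  have hmv : (McM n m k α).mulVec v ⟨0, hn⟩ = ∑ j, (McM n m k α) ⟨0, hn⟩ j * v j := by
    simp [Matrix.mulVec, dotProduct]
  rw [hmv, Finset.sum_congr rfl (fun j _ => by rw [hentry j, add_mul])]
  rw [Finset.sum_add_distrib]
  congr 1
  · rw [Finset.sum_eq_single (⟨0, hn⟩ : Fin n)]
    · rw [if_pos hz0]
    · intro b _ hb
      rw [if_neg (fun h => hb (Fin.ext (by omega))), zero_mul]
    · intro h; exact absurd (Finset.mem_univ _) h
  · have hsw : ∀ j : Fin n, (if (1 ≤ j.val ∧ j.val ≤ m-(n-1)+k) then (1-(α:ℂ)) else 0) * v j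
        = if (1 ≤ j.val ∧ j.val ≤ m-(n-1)+k) then (1-(α:ℂ)) * v j else 0 := by
      intro j; split_ifs <;> simp
    rw [Finset.sum_congr rfl (fun j _ => hsw j), ← Finset.sum_filter, Finset.mul_sum]

lemma sra_mulVec_ne {n m k : ℕ} (α : ℝ) (hn : 0 < n) (hd : m-(n-1)+k ≤ n-1) (v : Fin n → ℂ)
    (i : Fin n) (hi : i.val ≠ 0) :
    (McM n m k α).mulVec v i =
      if (i.val ≤ m-(n-1) ∨ m-(n-1)+k+1 ≤ i.val) then
        (1-(α:ℂ)) * v ⟨0, hn⟩ + (α:ℂ) * v i else 0 := by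
  have hz0 : ((⟨0, hn⟩ : Fin n) : ℕ) = 0 := rfl
  have hentry : ∀ j : Fin n, (McM n m k α) i j =
      (if j.val = 0 ∧ (i.val ≤ m-(n-1) ∨ m-(n-1)+k+1 ≤ i.val) then (1-(α:ℂ)) else 0)
      + (if i = j ∧ (i.val ≤ m-(n-1) ∨ m-(n-1)+k+1 ≤ i.val) then (α:ℂ) else 0) := by
    intro j
    rw [McM, Matrix.map_apply, sra_apply α hd]
    simp only [apply_ite (fun x : ℝ => (x:ℂ)), Complex.ofReal_mul, Complex.ofReal_natCast,
      Complex.ofReal_sub, Complex.ofReal_one, Complex.ofReal_zero, Fin.ext_iff,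
      true_and, and_true, eq_self_iff_true]
    split_ifs <;> first | ring1 | (exfalso; omega)
  have hmv : (McM n m k α).mulVec v i = ∑ j, (McM n m k α) i j * v j := by
    simp [Matrix.mulVec, dotProduct]
  rw [hmv, Finset.sum_congr rfl (fun j _ => by rw [hentry j, add_mul]), Finset.sum_add_distrib]
  by_cases hc : (i.val ≤ m-(n-1) ∨ m-(n-1)+k+1 ≤ i.val)
  · rw [if_pos hc]
    congr 1
    · rw [Finset.sum_eq_single (⟨0, hn⟩ : Fin n)]
      · rw [if_pos ⟨hz0, hc⟩]
      · intro b _ hb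
        rw [if_neg (fun h => hb (Fin.ext (by omega))), zero_mul]
      · intro h; exact absurd (Finset.mem_univ _) h
    · rw [Finset.sum_eq_single i]
      · rw [if_pos ⟨rfl, hc⟩]
      · intro b _ hb
        rw [if_neg (fun h => hb h.1.symm), zero_mul]
      · intro h; exact absurd (Finset.mem_univ _) h
  · rw [if_neg hc]
    have h1 : ∀ j : Fin n,
        (if j.val = 0 ∧ (i.val ≤ m-(n-1) ∨ m-(n-1)+k+1 ≤ i.val) then (1-(α:ℂ)) else 0) * v j
          = 0 := fun j => by rw [if_neg (fun h => hc h.2), zero_mul]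
    have h2 : ∀ j : Fin n,
        (if i = j ∧ (i.val ≤ m-(n-1) ∨ m-(n-1)+k+1 ≤ i.val) then (α:ℂ) else 0) * v j
          = 0 := fun j => by rw [if_neg (fun h => hc h.2), zero_mul]
    rw [Finset.sum_congr rfl (fun j _ => h1 j), Finset.sum_congr rfl (fun j _ => h2 j),
      Finset.sum_const_zero, add_zero]

lemma sra_sumS {n m k : ℕ} (hn : 2 ≤ n) (hm1 : n - 1 ≤ m) (hm2 : m ≤ 2*n-2) (w : Fin n → ℂ) (c : ℂ)
    (hv : ∀ j : Fin n, 1 ≤ j.val → j.val ≤ m-(n-1) → w j = c)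
    (hv0 : ∀ j : Fin n, m-(n-1) < j.val → j.val ≤ m-(n-1)+k → w j = 0) :
    ∑ j ∈ Finset.univ.filter (fun j : Fin n => 1 ≤ j.val ∧ j.val ≤ m-(n-1)+k), w j
      = ((m-(n-1):ℕ):ℂ) * c := by
  have hterm : ∀ j ∈ Finset.univ.filter (fun j : Fin n => 1 ≤ j.val ∧ j.val ≤ m-(n-1)+k),
      w j = if j.val ≤ m-(n-1) then c else 0 := by
    intro j hj
    simp only [Finset.mem_filter, Finset.mem_univ, true_and] at hj
    by_cases hjt : j.val ≤ m-(n-1)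
    · rw [if_pos hjt]; exact hv j hj.1 hjt
    · rw [if_neg hjt]; exact hv0 j (by omega) hj.2
  rw [Finset.sum_congr rfl hterm, Finset.sum_ite, Finset.sum_const_zero, add_zero,
    Finset.sum_const, Finset.filter_filter]
  have hfe : (Finset.univ.filter
        (fun j : Fin n => (1 ≤ j.val ∧ j.val ≤ m-(n-1)+k) ∧ j.val ≤ m-(n-1)))
      = (Finset.univ.filter (fun j : Fin n => 1 ≤ j.val ∧ j.val ≤ m-(n-1))) := by
    ext j
    simp only [Finset.mem_filter, Finset.mem_univ, true_and]
    omega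
  rw [hfe, sra_card n (m-(n-1)) (by omega), nsmul_eq_mul]

set_option maxHeartbeats 4000000 in
/-- The `A_α`-spectral radius of the mixed star of order `n`, size `m` and center
out-degree `m-n+k+1` is the larger root of
`(λ-α)(λ-α(m-n+k+1)) - (1-α)²(m-n+1)`. -/
theorem specRad_starMat {n m k : ℕ} (hn : 2 ≤ n) (hm₁ : n - 1 ≤ m) (hm₂ : m ≤ 2 * n - 2)
    (hk : k ≤ 2 * n - m - 2) (α : ℝ) (hα : α ∈ Set.Icc (0:ℝ) 1) :
    (specRad (Aalpha α (starMat n m k)) - α) *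
        (specRad (Aalpha α (starMat n m k)) - α * ((m : ℝ) - n + k + 1)) -
        (1 - α) ^ 2 * ((m : ℝ) - n + 1) = 0 ∧
    ∀ x : ℝ, (x - α) * (x - α * ((m : ℝ) - n + k + 1)) - (1 - α) ^ 2 * ((m : ℝ) - n + 1) = 0 →
      x ≤ specRad (Aalpha α (starMat n m k)) := by
  obtain ⟨hα0, hα1⟩ := hα
  have hn0 : 0 < n := by omega
  have hd : m - (n-1) + k ≤ n - 1 := by omega
  -- the two roots
  have key : ∃ L l : ℝ, L + l = α*(((m-(n-1)+k:ℕ):ℝ)+1) ∧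
      L * l = α^2*((m-(n-1)+k:ℕ):ℝ) - (1-α)^2*((m-(n-1):ℕ):ℝ) ∧ l ≤ L ∧ -L ≤ l ∧ 0 ≤ L := by
    set D : ℝ := ((m-(n-1)+k:ℕ):ℝ) with hD
    set T : ℝ := ((m-(n-1):ℕ):ℝ) with hT
    have hDnn : (0:ℝ) ≤ D := Nat.cast_nonneg _
    have hTnn : (0:ℝ) ≤ T := Nat.cast_nonneg _
    have hdisc : (0:ℝ) ≤ (α*(D+1))^2 - 4*(α^2*D - (1-α)^2*T) := by
      nlinarith [sq_nonneg (α*(D-1)), sq_nonneg (1-α)]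
    set ss : ℝ := Real.sqrt ((α*(D+1))^2 - 4*(α^2*D - (1-α)^2*T)) with hss
    have hs2 : ss^2 = (α*(D+1))^2 - 4*(α^2*D - (1-α)^2*T) := Real.sq_sqrt hdisc
    have hs0 : 0 ≤ ss := Real.sqrt_nonneg _
    have he0 : 0 ≤ α*(D+1) := by nlinarith
    refine ⟨(α*(D+1) + ss)/2, (α*(D+1) - ss)/2, by ring, ?_, by linarith, by linarith, by linarith⟩
    linear_combination (-(1:ℝ)/4)*hs2
  obtain ⟨L, l, hsum, hprod, hll, hnegl, hL0⟩ := key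
  have hquad : ∀ x : ℝ, (x - α)*(x - α*((m-(n-1)+k:ℕ):ℝ)) - (1-α)^2*((m-(n-1):ℕ):ℝ)
      = (x - L)*(x - l) := by
    intro x
    linear_combination x * hsum - hprod
  have hLα : α ≤ L := by
    by_contra hcon
    push_neg at hcon
    have h1 := hquad α
    have h2 : 0 < α - L := by linarith
    have h3 : 0 < α - l := by linarith
    nlinarith [mul_pos h2 h3, sq_nonneg (1-α), (Nat.cast_nonneg (m-(n-1)) : (0:ℝ) ≤ _)]
  have hLd : α*((m-(n-1)+k:ℕ):ℝ) ≤ L := by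
    by_contra hcon
    push_neg at hcon
    have h1 := hquad (α*((m-(n-1)+k:ℕ):ℝ))
    have h2 : 0 < α*((m-(n-1)+k:ℕ):ℝ) - L := by linarith
    have h3 : 0 < α*((m-(n-1)+k:ℕ):ℝ) - l := by linarith
    nlinarith [mul_pos h2 h3, sq_nonneg (1-α), (Nat.cast_nonneg (m-(n-1)) : (0:ℝ) ≤ _)]
  have hsumC : (L:ℂ) + (l:ℂ) = (α:ℂ)*(((m-(n-1)+k:ℕ):ℂ)+1) := by exact_mod_cast hsum
  have hprodC : (L:ℂ) * (l:ℂ)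
      = (α:ℂ)^2*((m-(n-1)+k:ℕ):ℂ) - (1-(α:ℂ))^2*((m-(n-1):ℕ):ℂ) := by exact_mod_cast hprod
  have hquadC : ∀ x : ℂ, (x - (α:ℂ))*(x - (α:ℂ)*((m-(n-1)+k:ℕ):ℂ))
      - (1-(α:ℂ))^2*((m-(n-1):ℕ):ℂ) = (x - (L:ℂ))*(x - (l:ℂ)) := by
    intro x
    linear_combination x * hsumC - hprodC
  -- upper bound for all eigenvalues
  have hub : ∀ μ : ℂ, (McM n m k α).charpoly.IsRoot μ → ‖μ‖ ≤ L := by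
    intro μ hroot
    obtain ⟨v, hv0, hveq⟩ := (my_isRoot_iff_eigen _ μ).1 hroot
    by_cases hμ0 : μ = 0
    · rw [hμ0]
      simpa using hL0
    by_cases hμα : μ = (α:ℂ)
    · rw [hμα, Complex.norm_real, Real.norm_eq_abs, abs_of_nonneg hα0]
      exact hLα
    have hC : ∀ j : Fin n, j.val ≠ 0 → ¬(j.val ≤ m-(n-1) ∨ m-(n-1)+k+1 ≤ j.val) → v j = 0 := by
      intro j hj hc
      have h1 := sra_mulVec_ne α hn0 hd v j hj
      rw [hveq, if_neg hc] at h1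
      simp only [Pi.smul_apply, smul_eq_mul] at h1
      rcases mul_eq_zero.mp h1 with h | h
      · exact absurd h hμ0
      · exact h
    have hB : ∀ j : Fin n, j.val ≠ 0 → (j.val ≤ m-(n-1) ∨ m-(n-1)+k+1 ≤ j.val) →
        (μ - (α:ℂ)) * v j = (1-(α:ℂ)) * v ⟨0, hn0⟩ := by
      intro j hj hc
      have h1 := sra_mulVec_ne α hn0 hd v j hj
      rw [hveq, if_pos hc] at h1
      simp only [Pi.smul_apply, smul_eq_mul] at h1
      linear_combination h1
    have hvz : v ⟨0, hn0⟩ ≠ 0 := by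
      intro h0
      apply hv0
      funext j
      simp only [Pi.zero_apply]
      by_cases hj : j.val = 0
      · rw [show j = (⟨0, hn0⟩ : Fin n) from Fin.ext hj, h0]
      · by_cases hc : (j.val ≤ m-(n-1) ∨ m-(n-1)+k+1 ≤ j.val)
        · have := hB j hj hc
          rw [h0, mul_zero] at this
          rcases mul_eq_zero.mp this with h | h
          · exact absurd (sub_eq_zero.mp h) hμα
          · exact h
        · exact hC j hj hc
    have hSw : (μ - (α:ℂ)) * (∑ j ∈ Finset.univ.filter
          (fun j : Fin n => 1 ≤ j.val ∧ j.val ≤ m-(n-1)+k), v j)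
        = ((m-(n-1):ℕ):ℂ) * ((1-(α:ℂ)) * v ⟨0, hn0⟩) := by
      rw [Finset.mul_sum]
      exact sra_sumS (k := k) hn hm₁ hm₂ (fun j => (μ - (α:ℂ)) * v j) ((1-(α:ℂ)) * v ⟨0, hn0⟩)
        (fun j h1 h2 => hB j (by omega) (Or.inl h2))
        (fun j h1 h2 => by show (μ - (α:ℂ)) * v j = 0; rw [hC j (by omega) (by omega), mul_zero])
    have h0 := sra_mulVec0 α hn0 hd v
    rw [hveq] at h0
    simp only [Pi.smul_apply, smul_eq_mul] at h0
    have h2 : ((μ - (α:ℂ))*(μ - (α:ℂ)*((m-(n-1)+k:ℕ):ℂ))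
        - (1-(α:ℂ))^2*((m-(n-1):ℕ):ℂ)) * v ⟨0, hn0⟩ = 0 := by
      linear_combination (μ - (α:ℂ)) * h0 + (1-(α:ℂ)) * hSw
    have hμq : (μ - (L:ℂ))*(μ - (l:ℂ)) = 0 := by
      rw [← hquadC μ]
      rcases mul_eq_zero.mp h2 with h | h
      · exact h
      · exact absurd h hvz
    rcases mul_eq_zero.mp hμq with h | h
    · rw [sub_eq_zero.mp h, Complex.norm_real, Real.norm_eq_abs, abs_of_nonneg hL0]
    · rw [sub_eq_zero.mp h, Complex.norm_real, Real.norm_eq_abs]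
      rw [abs_le]
      exact ⟨by linarith, hll⟩
  -- L is an eigenvalue
  have hmem : (McM n m k α).charpoly.IsRoot ((L:ℝ):ℂ) := by
    rw [my_isRoot_iff_eigen]
    rcases eq_or_ne L α with hLeq | hLne
    · by_cases hd2 : m-(n-1)+k+1 ≤ n-1
      · -- an in-neighbour of the centre exists: e_{d+1} is an eigenvector for α = L
        obtain ⟨i0, hi0val⟩ : ∃ i0 : Fin n, i0.val = m-(n-1)+k+1 :=
          ⟨⟨m-(n-1)+k+1, by omega⟩, rfl⟩
        set v : Fin n → ℂ := fun j => if j = i0 then 1 else 0 with hvdef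
        have hvz : v ⟨0, hn0⟩ = 0 := by
          simp only [hvdef]
          rw [if_neg]
          intro h
          have hval : (0:ℕ) = i0.val := congrArg Fin.val h
          omega
        have hvio : v i0 = 1 := by
          rw [hvdef]
          exact if_pos rfl
        refine ⟨v, ?_, ?_⟩
        · intro h
          have h2 := congrFun h i0
          rw [hvio, Pi.zero_apply] at h2
          exact one_ne_zero h2
        · funext i
          simp only [Pi.smul_apply, smul_eq_mul]
          by_cases hi : i.val = 0
          · rw [show i = (⟨0, hn0⟩ : Fin n) from Fin.ext hi]
            rw [sra_mulVec0 α hn0 hd v]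
            have hSz : ∑ j ∈ Finset.univ.filter
                (fun j : Fin n => 1 ≤ j.val ∧ j.val ≤ m-(n-1)+k), v j = 0 := by
              have := sra_sumS (k := k) hn hm₁ hm₂ v 0
                (fun j h1 h2 => by
                  simp only [hvdef]
                  rw [if_neg]
                  intro h
                  have hval : j.val = i0.val := congrArg Fin.val h
                  omega)
                (fun j h1 h2 => by
                  simp only [hvdef]
                  rw [if_neg]
                  intro h
                  have hval : j.val = i0.val := congrArg Fin.val h
                  omega)
              rw [this, mul_zero]
            rw [hSz, hvz]
            ring
          · rw [sra_mulVec_ne α hn0 hd v i hi]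
            by_cases hc : (i.val ≤ m-(n-1) ∨ m-(n-1)+k+1 ≤ i.val)
            · rw [if_pos hc, hvz, hLeq]
              ring
            · rw [if_neg hc]
              have hvi : v i = 0 := by
                simp only [hvdef]
                rw [if_neg]
                intro h
                have hval : i.val = i0.val := congrArg Fin.val h
                omega
              rw [hvi, mul_zero]
      · -- all non-centre vertices are dominated: e_0 is an eigenvector
        have hdeq : m-(n-1)+k = n-1 := by omega
        have hT10 : α = 1 ∨ m-(n-1) = 0 := by
          have h1 := hquad α
          rw [hLeq] at h1
          have h2 : (1-α)^2*((m-(n-1):ℕ):ℝ) = 0 := by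
            linear_combination -h1
          rcases mul_eq_zero.mp h2 with h | h
          · left
            have h3 := sq_eq_zero_iff.mp h
            linarith
          · right; exact_mod_cast h
        have hαD : (α:ℝ)*((m-(n-1)+k:ℕ):ℝ) = α := by
          have h1 : (1:ℝ) ≤ ((m-(n-1)+k:ℕ):ℝ) := by
            have : 1 ≤ m-(n-1)+k := by omega
            exact_mod_cast this
          have h2 : α ≤ α*((m-(n-1)+k:ℕ):ℝ) := by nlinarith
          have h3 : α*((m-(n-1)+k:ℕ):ℝ) ≤ α := by linarith [hLd]
          linarith
        set v : Fin n → ℂ := fun j => if j = (⟨0, hn0⟩ : Fin n) then 1 else 0 with hvdef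
        have hvz : v ⟨0, hn0⟩ = 1 := by
          rw [hvdef]
          exact if_pos rfl
        refine ⟨v, ?_, ?_⟩
        · intro h
          have h2 := congrFun h ⟨0, hn0⟩
          rw [hvz, Pi.zero_apply] at h2
          exact one_ne_zero h2
        · funext i
          simp only [Pi.smul_apply, smul_eq_mul]
          by_cases hi : i.val = 0
          · rw [show i = (⟨0, hn0⟩ : Fin n) from Fin.ext hi]
            rw [sra_mulVec0 α hn0 hd v]
            have hSz : ∑ j ∈ Finset.univ.filter
                (fun j : Fin n => 1 ≤ j.val ∧ j.val ≤ m-(n-1)+k), v j = 0 := by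
              have := sra_sumS (k := k) hn hm₁ hm₂ v 0
                (fun j h1 h2 => by
                  simp only [hvdef]
                  rw [if_neg]
                  intro h
                  have hval : j.val = 0 := congrArg Fin.val h
                  omega)
                (fun j h1 h2 => by
                  simp only [hvdef]
                  rw [if_neg]
                  intro h
                  have hval : j.val = 0 := congrArg Fin.val h
                  omega)
              rw [this, mul_zero]
            rw [hSz, hvz]
            have hADL : ((α:ℝ):ℂ)*((m-(n-1)+k:ℕ):ℂ) = ((L:ℝ):ℂ) := by
              rw [hLeq]
              exact_mod_cast hαD
            linear_combination hADL
          · rw [sra_mulVec_ne α hn0 hd v i hi]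
            have hvi : v i = 0 := by
              simp only [hvdef]
              rw [if_neg]
              intro h
              have hval : i.val = 0 := congrArg Fin.val h
              omega
            by_cases hc : (i.val ≤ m-(n-1) ∨ m-(n-1)+k+1 ≤ i.val)
            · rw [if_pos hc, hvz, hvi]
              have hα1' : α = 1 := by
                rcases hT10 with h | h
                · exact h
                · exfalso
                  have hlt := i.isLt
                  omega
              rw [hα1']
              simp
            · rw [if_neg hc, hvi, mul_zero]
    · -- L ≠ α : generic eigenvector
      set v : Fin n → ℂ := fun j => if j.val = 0 then ((L:ℂ) - (α:ℂ))
        else if (j.val ≤ m-(n-1) ∨ m-(n-1)+k+1 ≤ j.val) then (1-(α:ℂ)) else 0 with hvdef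
      have hvz : v ⟨0, hn0⟩ = (L:ℂ) - (α:ℂ) := by
        rw [hvdef]
        exact if_pos rfl
      refine ⟨v, ?_, ?_⟩
      · intro h
        have := congrFun h ⟨0, hn0⟩
        rw [hvz] at this
        simp only [Pi.zero_apply, sub_eq_zero] at this
        exact hLne (by exact_mod_cast this)
      · funext i
        simp only [Pi.smul_apply, smul_eq_mul]
        by_cases hi : i.val = 0
        · rw [show i = (⟨0, hn0⟩ : Fin n) from Fin.ext hi]
          rw [sra_mulVec0 α hn0 hd v]
          have hSz : ∑ j ∈ Finset.univ.filter
              (fun j : Fin n => 1 ≤ j.val ∧ j.val ≤ m-(n-1)+k), v j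
              = ((m-(n-1):ℕ):ℂ) * (1-(α:ℂ)) := by
            refine sra_sumS (k := k) hn hm₁ hm₂ v (1-(α:ℂ)) ?_ ?_
            · intro j h1 h2
              simp only [hvdef]
              rw [if_neg (by omega), if_pos (Or.inl h2)]
            · intro j h1 h2
              simp only [hvdef]
              rw [if_neg (by omega), if_neg (by omega)]
          rw [hSz, hvz]
          have hq := hquadC ((L:ℝ):ℂ)
          have hLL : (((L:ℝ):ℂ) - (L:ℂ))*(((L:ℝ):ℂ) - (l:ℂ)) = 0 := by
            rw [sub_self, zero_mul]
          rw [hLL] at hq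
          linear_combination -hq
        · rw [sra_mulVec_ne α hn0 hd v i hi]
          by_cases hc : (i.val ≤ m-(n-1) ∨ m-(n-1)+k+1 ≤ i.val)
          · rw [if_pos hc, hvz]
            have hvi : v i = 1-(α:ℂ) := by
              simp only [hvdef]
              rw [if_neg hi, if_pos hc]
            rw [hvi]
            ring
          · rw [if_neg hc]
            have hvi : v i = 0 := by
              simp only [hvdef]
              rw [if_neg hi, if_neg hc]
            rw [hvi, mul_zero]
  -- compute the spectral radius
  have habs : ‖((L:ℝ):ℂ)‖ = L := by
    rw [Complex.norm_real, Real.norm_eq_abs, abs_of_nonneg hL0]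
  have hspec : specRad (Aalpha α (starMat n m k)) = L := by
    have hmemset : L ∈ {r : ℝ | ∃ μ : ℂ, (McM n m k α).charpoly.IsRoot μ ∧ r = ‖μ‖} :=
      ⟨((L:ℝ):ℂ), hmem, habs.symm⟩
    have hubset : ∀ r ∈ {r : ℝ | ∃ μ : ℂ, (McM n m k α).charpoly.IsRoot μ ∧ r = ‖μ‖},
        r ≤ L := by
      rintro r ⟨μ, hμ, rfl⟩
      exact hub μ hμ
    exact le_antisymm (csSup_le ⟨L, hmemset⟩ hubset) (le_csSup ⟨L, hubset⟩ hmemset)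
  -- cast identities
  have hcastD : ((m-(n-1)+k:ℕ):ℝ) = (m:ℝ) - (n:ℝ) + (k:ℝ) + 1 := by
    rw [Nat.cast_add, Nat.cast_sub hm₁, Nat.cast_sub (by omega : 1 ≤ n)]
    push_cast
    ring
  have hcastT : ((m-(n-1):ℕ):ℝ) = (m:ℝ) - (n:ℝ) + 1 := by
    rw [Nat.cast_sub hm₁, Nat.cast_sub (by omega : 1 ≤ n)]
    push_cast
    ring
  rw [hspec]
  constructor
  · rw [← hcastD, ← hcastT, hquad L]
    ring
  · intro x hx
    rw [← hcastD, ← hcastT, hquad x] at hx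
    rcases mul_eq_zero.mp hx with h | h
    · rw [sub_eq_zero.mp h]
    · rw [sub_eq_zero.mp h]
      exact hll
end

section
/- For α ∈ [0,1] and n ≥ 2, among all mixed trees of order n and size m (n−1 ≤ m ≤ 2n−2), the maximum A_α-spectral radius over all mixed stars of order n and size m with center out-degree m−n+k+1 (0 ≤ k ≤ 2n−m−2) is attained at k = 2n−m−2, i.e., when the center's out-degree is n−1; at this value the spectral radius is the largest root of λ² − αnλ + α²(n−1) − (1−α)²(m−n+1). -/
attribute [local instance] Classical.propDecidable

section AuxSpecRad
open Finset

noncomputable def rhoAux (α κ T : ℝ) : ℝ :=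
  (α * (κ + 1) + Real.sqrt ((α * (κ - 1)) ^ 2 + 4 * T * (1 - α) ^ 2)) / 2

noncomputable def r1Aux (α κ T : ℝ) : ℝ :=
  (α * (κ + 1) - Real.sqrt ((α * (κ - 1)) ^ 2 + 4 * T * (1 - α) ^ 2)) / 2

lemma discr_nonneg (α κ T : ℝ) (hT : 0 ≤ T) :
    0 ≤ (α * (κ - 1)) ^ 2 + 4 * T * (1 - α) ^ 2 := by positivity

lemma rho_add (α κ T : ℝ) : r1Aux α κ T + rhoAux α κ T = α * (κ + 1) := by
  unfold rhoAux r1Aux; ring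

lemma rho_mul (α κ T : ℝ) (hT : 0 ≤ T) :
    r1Aux α κ T * rhoAux α κ T = α ^ 2 * κ - T * (1 - α) ^ 2 := by
  unfold rhoAux r1Aux
  have h := Real.sq_sqrt (discr_nonneg α κ T hT)
  nlinarith [h]

lemma sqrt_ge (α κ T : ℝ) (hT : 0 ≤ T) :
    |α * (κ - 1)| ≤ Real.sqrt ((α * (κ - 1)) ^ 2 + 4 * T * (1 - α) ^ 2) := by
  rw [← Real.sqrt_sq_eq_abs]
  apply Real.sqrt_le_sqrt; nlinarith

lemma rho_ge_alpha (α κ T : ℝ) (hT : 0 ≤ T) : α ≤ rhoAux α κ T := by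
  have h := sqrt_ge α κ T hT
  have := abs_nonneg (α * (κ - 1))
  have h2 : -(α * (κ - 1)) ≤ |α * (κ - 1)| := neg_le_abs _
  unfold rhoAux; nlinarith

lemma rho_ge_ak (α κ T : ℝ) (hT : 0 ≤ T) : α * κ ≤ rhoAux α κ T := by
  have h := sqrt_ge α κ T hT
  have h2 : (α * (κ - 1)) ≤ |α * (κ - 1)| := le_abs_self _
  unfold rhoAux; nlinarith

lemma r1_le_rho (α κ T : ℝ) (hT : 0 ≤ T) : r1Aux α κ T ≤ rhoAux α κ T := by
  have := Real.sqrt_nonneg ((α * (κ - 1)) ^ 2 + 4 * T * (1 - α) ^ 2)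
  unfold rhoAux r1Aux; linarith

lemma rho_nonneg (α κ T : ℝ) (hα : 0 ≤ α) (hT : 0 ≤ T) : 0 ≤ rhoAux α κ T :=
  le_trans hα (rho_ge_alpha α κ T hT)

lemma neg_rho_le_r1 (α κ T : ℝ) (hα : 0 ≤ α) (hκ : 0 ≤ κ) (hT : 0 ≤ T) :
    -rhoAux α κ T ≤ r1Aux α κ T := by
  have h := rho_add α κ T
  nlinarith

lemma quad_factor (α κ T x : ℝ) (hT : 0 ≤ T) :
    x ^ 2 - α * (κ + 1) * x + (α ^ 2 * κ - T * (1 - α) ^ 2)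
      = (x - r1Aux α κ T) * (x - rhoAux α κ T) := by
  have h1 := rho_add α κ T
  have h2 := rho_mul α κ T hT
  linear_combination x * h1 - h2

lemma quad_factor_c (α κ T : ℝ) (hT : 0 ≤ T) (μ : ℂ) :
    (μ - α) * (μ - α * κ) - T * (1 - α) ^ 2
      = (μ - (r1Aux α κ T : ℝ)) * (μ - (rhoAux α κ T : ℝ)) := by
  have h1 := rho_add α κ T
  have h2 := rho_mul α κ T hT
  have h1' : ((r1Aux α κ T : ℝ) : ℂ) + ((rhoAux α κ T : ℝ) : ℂ) = (α : ℂ) * ((κ:ℂ) + 1) := by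
    exact_mod_cast congrArg (fun y : ℝ => (y : ℂ)) h1
  have h2' : ((r1Aux α κ T : ℝ) : ℂ) * ((rhoAux α κ T : ℝ) : ℂ)
      = (α : ℂ) ^ 2 * κ - (T:ℂ) * (1 - α) ^ 2 := by
    exact_mod_cast congrArg (fun y : ℝ => (y : ℂ)) h2
  linear_combination μ * h1' - h2'

lemma rho_mono (α κ κ' T : ℝ) (hα : 0 ≤ α) (h : κ ≤ κ') (hT : 0 ≤ T) :
    rhoAux α κ T ≤ rhoAux α κ' T := by
  set x := rhoAux α κ T with hx
  have hxa : α ≤ x := rho_ge_alpha α κ T hT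
  have hf : x ^ 2 - α * (κ + 1) * x + (α ^ 2 * κ - T * (1 - α) ^ 2) = 0 := by
    rw [quad_factor α κ T x hT]; exact mul_eq_zero_of_right _ (sub_self _)
  have hf' : (x - r1Aux α κ' T) * (x - rhoAux α κ' T)
      = -(α * (κ' - κ) * (x - α)) := by
    rw [← quad_factor α κ' T x hT]; linear_combination hf
  by_contra hcon
  push_neg at hcon
  have h1 : 0 < x - rhoAux α κ' T := by linarith
  have h2 : 0 < x - r1Aux α κ' T := by
    have := r1_le_rho α κ' T hT; linarith
  nlinarith [mul_pos h2 h1, mul_nonneg (mul_nonneg hα (by linarith : (0:ℝ) ≤ κ' - κ)) (by linarith : (0:ℝ) ≤ x - α)]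


lemma det_arrowhead {ι : Type*} [Fintype ι] [DecidableEq ι] (z : ι)
    (M : Matrix ι ι ℂ) (h : ∀ i j, i ≠ z → j ≠ z → i ≠ j → M i j = 0) :
    M.det = M z z * ∏ i ∈ univ.erase z, M i i
      - ∑ i ∈ univ.erase z, M z i * M i z * ∏ j ∈ (univ.erase z).erase i, M j j := by
  classical
  rw [Matrix.det_apply]
  set S : Finset (Equiv.Perm ι) :=
    insert 1 ((univ.erase z).image fun i => Equiv.swap z i) with hS
  have hzero : ∀ σ ∈ (univ : Finset (Equiv.Perm ι)), σ ∉ S →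
      Equiv.Perm.sign σ • ∏ i, M (σ i) i = 0 := by
    intro σ _ hσ
    simp only [hS, mem_insert, mem_image, mem_erase, mem_univ, and_true] at hσ
    push_neg at hσ
    obtain ⟨hσ1, hσ2⟩ := hσ
    have hex : ∃ i, i ≠ z ∧ σ i ≠ z ∧ σ i ≠ i := by
      by_contra hc
      push_neg at hc
      by_cases hz : σ z = z
      · apply hσ1
        ext i
        by_cases hi : i = z
        · simp [hi, hz]
        · have h1 : σ i ≠ z := fun hh => hi (σ.injective (hh.trans hz.symm))
          simp [hc i hi h1]
      · set i₀ := σ⁻¹ z with hi₀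
        have hσi₀ : σ i₀ = z := by simp [hi₀]
        have hi₀z : i₀ ≠ z := fun hh => hz (hh ▸ hσi₀)
        apply hσ2 i₀ hi₀z
        have hfix : ∀ j, j ≠ z → j ≠ i₀ → σ j = j := by
          intro j hj1 hj2
          have h1 : σ j ≠ z := fun hh => hj2 (σ.injective (hh.trans hσi₀.symm))
          exact hc j hj1 h1
        have hσz : σ z = i₀ := by
          by_contra hne
          have := hfix (σ z) hz hne
          exact hz (σ.injective this)
        ext i
        by_cases hi : i = z
        · simp [hi, hσz, Equiv.swap_apply_left]
        · by_cases hi' : i = i₀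
          · simp [hi', hσi₀, Equiv.swap_apply_right]
          · rw [Equiv.swap_apply_of_ne_of_ne hi hi', hfix i hi hi']
    obtain ⟨i, hi1, hi2, hi3⟩ := hex
    have hp : ∏ i, M (σ i) i = 0 :=
      Finset.prod_eq_zero (mem_univ i) (h (σ i) i hi2 hi1 hi3)
    rw [hp, smul_zero]
  rw [← Finset.sum_subset (subset_univ S) hzero]
  have h1S : (1 : Equiv.Perm ι) ∉ (univ.erase z).image fun i => Equiv.swap z i := by
    simp only [mem_image, mem_erase, mem_univ, and_true]
    rintro ⟨i, hi, hswap⟩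
    have h2 := congrArg (fun σ : Equiv.Perm ι => σ z) hswap
    simp only [Equiv.swap_apply_left, Equiv.Perm.one_apply] at h2
    exact hi h2
  rw [hS, Finset.sum_insert h1S]
  have hinj : ∀ x ∈ univ.erase z, ∀ y ∈ univ.erase z,
      Equiv.swap z x = Equiv.swap z y → x = y := by
    intro x hx y hy hxy
    simp only [mem_erase, mem_univ, and_true] at hx hy
    have h2 := congrArg (fun σ : Equiv.Perm ι => σ x) hxy
    simp only [Equiv.swap_apply_right] at h2
    by_cases hxy' : x = y
    · exact hxy'
    · rw [Equiv.swap_apply_of_ne_of_ne hx hxy'] at h2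
      exact absurd h2.symm hx
  rw [Finset.sum_image hinj]
  have hid : (Equiv.Perm.sign (1 : Equiv.Perm ι)) • ∏ i, M ((1 : Equiv.Perm ι) i) i
      = M z z * ∏ i ∈ univ.erase z, M i i := by
    simp only [Equiv.Perm.sign_one, one_smul, Equiv.Perm.one_apply]
    exact (Finset.mul_prod_erase univ _ (mem_univ z)).symm
  rw [hid, sub_eq_add_neg, ← Finset.sum_neg_distrib]
  congr 1
  apply Finset.sum_congr rfl
  intro i hi
  have hiz : i ≠ z := by simp only [mem_erase, mem_univ, and_true] at hi; exact hi
  have hsign : Equiv.Perm.sign (Equiv.swap z i) = -1 := Equiv.Perm.sign_swap (Ne.symm hiz)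
  rw [hsign]
  have hprod : ∏ j, M ((Equiv.swap z i) j) j
      = M i z * (M z i * ∏ j ∈ (univ.erase z).erase i, M j j) := by
    rw [← Finset.mul_prod_erase univ _ (mem_univ z), Equiv.swap_apply_left]
    congr 1
    rw [← Finset.mul_prod_erase (univ.erase z) _ hi, Equiv.swap_apply_right]
    congr 1
    apply Finset.prod_congr rfl
    intro j hj
    simp only [mem_erase] at hj
    rw [Equiv.swap_apply_of_ne_of_ne hj.2.1 hj.1]
  rw [hprod]
  simp only [Units.neg_smul, one_smul]
  ring


lemma isRoot_charpoly_iff {n : Type*} [Fintype n] [DecidableEq n]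
    (M : Matrix n n ℂ) (μ : ℂ) :
    M.charpoly.IsRoot μ ↔ (μ • (1 : Matrix n n ℂ) - M).det = 0 := by
  have key : M.charpoly.eval μ = (μ • (1 : Matrix n n ℂ) - M).det := by
    rw [Matrix.charpoly]
    have h1 : Polynomial.eval μ (M.charmatrix.det)
        = ((Polynomial.evalRingHom μ).mapMatrix M.charmatrix).det := by
      rw [← RingHom.map_det]; rfl
    rw [h1]
    congr 1
    ext i j
    by_cases hij : i = j
    · subst hij
      simp [Matrix.charmatrix_apply, Matrix.one_apply, Matrix.diagonal_apply]
    · simp [Matrix.charmatrix_apply, Matrix.one_apply, Matrix.diagonal_apply, hij]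
  rw [Polynomial.IsRoot, key]

lemma card_filter_val (n : ℕ) (P : ℕ → Prop) [DecidablePred P] :
    ((univ : Finset (Fin n)).filter (fun i => P i.val)).card
      = ((Finset.range n).filter P).card := by
  rw [Finset.card_filter, Finset.card_filter, Fin.sum_univ_eq_sum_range (fun v => if P v then 1 else 0)]


section entries
variable (n m k t K : ℕ) (hn : 2 ≤ n) (ht : t = m - (n - 1)) (hKdef : K = t + k)
  (hK : K ≤ n - 1) (α : ℝ)

lemma starMat_hub (hz : 2 ≤ n) (ht : t = m - (n-1)) (hKdef : K = t + k)
    (i j : Fin n) (hi : i.val = 0) :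
    starMat n m k i j = if 1 ≤ j.val ∧ j.val ≤ K then (1:ℝ) else 0 := by
  simp only [starMat, Matrix.of_apply]
  subst ht hKdef
  split_ifs <;> first | rfl | omega

lemma starMat_leaf (ht : t = m - (n-1)) (hKdef : K = t + k)
    (i j : Fin n) (hi : i.val ≠ 0) :
    starMat n m k i j
      = if j.val = 0 ∧ (i.val ≤ t ∨ K + 1 ≤ i.val) then (1:ℝ) else 0 := by
  simp only [starMat, Matrix.of_apply]
  subst ht hKdef
  split_ifs <;> first | rfl | omega

lemma starMat_rowsum_hub (hn : 2 ≤ n) (ht : t = m - (n-1)) (hKdef : K = t + k)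
    (hK : K ≤ n - 1) (i : Fin n) (hi : i.val = 0) :
    ∑ j, starMat n m k i j = (K : ℝ) := by
  rw [Finset.sum_congr rfl (fun j _ => starMat_hub n m k t K hn ht hKdef i j hi)]
  rw [Fin.sum_univ_eq_sum_range (fun v => if 1 ≤ v ∧ v ≤ K then (1:ℝ) else 0) n]
  rw [Finset.sum_boole]
  congr 1
  have hset : (Finset.range n).filter (fun v => 1 ≤ v ∧ v ≤ K) = Finset.Icc 1 K := by
    ext v; simp only [mem_filter, mem_range, Finset.mem_Icc]; omega
  rw [hset, Nat.card_Icc]; omega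

lemma starMat_rowsum_leaf (ht : t = m - (n-1)) (hKdef : K = t + k)
    (i : Fin n) (hi : i.val ≠ 0) :
    ∑ j, starMat n m k i j
      = if (i.val ≤ t ∨ K + 1 ≤ i.val) then (1:ℝ) else 0 := by
  have hn1 : 0 < n := i.pos
  rw [Finset.sum_congr rfl (fun j _ => starMat_leaf n m k t K ht hKdef i j hi)]
  rw [Finset.sum_eq_single (⟨0, hn1⟩ : Fin n)]
  · simp
  · intro b _ hb
    have : b.val ≠ 0 := fun hh => hb (Fin.ext hh)
    simp [this]
  · simp

lemma det_formula (n m k t K : ℕ) (hn : 2 ≤ n) (ht : t = m - (n - 1))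
    (hKdef : K = t + k) (hK : K ≤ n - 1) (α : ℝ) (μ : ℂ) :
    (μ • (1 : Matrix (Fin n) (Fin n) ℂ)
        - ((Aalpha α (starMat n m k)).map (fun x => (x : ℂ)))).det
      = (μ - (α : ℂ) * (K : ℕ)) * ((μ - (α:ℂ)) ^ (n - 1 - k) * μ ^ k)
        - (t : ℂ) * (1 - (α:ℂ)) ^ 2 * ((μ - (α:ℂ)) ^ (n - 2 - k) * μ ^ k) := by
  classical
  have hn0 : 0 < n := by omega
  set z : Fin n := ⟨0, hn0⟩ with hzdef
  set A := starMat n m k with hA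
  set M : Matrix (Fin n) (Fin n) ℂ :=
    μ • (1 : Matrix (Fin n) (Fin n) ℂ)
      - ((Aalpha α A).map (fun x => (x : ℂ))) with hM
  have hzval : z.val = 0 := rfl
  -- generic entry formula for M
  have hMapp : ∀ i j : Fin n, M i j
      = (if i = j then μ else 0) - ((α * (if i = j then ∑ l, A i l else 0)
          + (1 - α) * A i j : ℝ) : ℂ) := by
    intro i j
    simp only [hM, Matrix.sub_apply, Matrix.smul_apply, Matrix.one_apply,
      Matrix.map_apply, Aalpha, Matrix.add_apply, Matrix.smul_apply,
      Matrix.diagonal_apply, smul_eq_mul]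
    by_cases hij : i = j <;> simp [hij]
  -- arrowhead hypothesis
  have harrow : ∀ i j, i ≠ z → j ≠ z → i ≠ j → M i j = 0 := by
    intro i j hiz hjz hij
    have hjval : j.val ≠ 0 := fun hh => hjz (Fin.ext hh)
    have hival : i.val ≠ 0 := fun hh => hiz (Fin.ext hh)
    have hAij : A i j = 0 := by
      rw [hA, starMat_leaf n m k t K ht hKdef i j hival, if_neg]
      intro hc; exact hjval hc.1
    rw [hMapp i j, if_neg hij, if_neg hij, hAij]
    push_cast
    ring
  -- hub diagonal
  have hMzz : M z z = μ - (α : ℂ) * (K : ℕ) := by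
    rw [hMapp z z, if_pos rfl, if_pos rfl,
      starMat_rowsum_hub n m k t K hn ht hKdef hK z hzval]
    have hAzz : A z z = 0 := by
      rw [hA, starMat_hub n m k t K hn ht hKdef z z hzval, if_neg]
      intro hc; exact absurd hzval (by omega)
    rw [hAzz]
    push_cast
    ring
  -- leaf diagonal
  have hMdiag : ∀ i : Fin n, i ≠ z →
      M i i = if (i.val ≤ t ∨ K + 1 ≤ i.val) then μ - (α:ℂ) else μ := by
    intro i hiz
    have hival : i.val ≠ 0 := fun hh => hiz (Fin.ext hh)
    have hAii : A i i = 0 := by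
      rw [hA, starMat_leaf n m k t K ht hKdef i i hival, if_neg]
      intro hc; exact hival hc.1
    rw [hMapp i i, if_pos rfl, if_pos rfl,
      starMat_rowsum_leaf n m k t K ht hKdef i hival, hAii]
    by_cases hc : (i.val ≤ t ∨ K + 1 ≤ i.val)
    · rw [if_pos hc, if_pos hc]; push_cast; ring
    · rw [if_neg hc, if_neg hc]; push_cast; ring
  -- hub row entries
  have hMz : ∀ i : Fin n, i ≠ z →
      M z i = if (1 ≤ i.val ∧ i.val ≤ K) then -((1 - α : ℝ):ℂ) else 0 := by
    intro i hiz
    have hne : z ≠ i := fun hh => hiz hh.symm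
    rw [hMapp z i, if_neg hne, if_neg hne,
      hA, starMat_hub n m k t K hn ht hKdef z i hzval]
    by_cases hc : (1 ≤ i.val ∧ i.val ≤ K)
    · rw [if_pos hc, if_pos hc]; push_cast; ring
    · rw [if_neg hc, if_neg hc]; push_cast; ring
  -- hub column entries
  have hMcol : ∀ i : Fin n, i ≠ z →
      M i z = if (i.val ≤ t ∨ K + 1 ≤ i.val) then -((1 - α : ℝ):ℂ) else 0 := by
    intro i hiz
    have hival : i.val ≠ 0 := fun hh => hiz (Fin.ext hh)
    rw [hMapp i z, if_neg hiz, if_neg hiz,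
      hA, starMat_leaf n m k t K ht hKdef i z hival]
    by_cases hc : (i.val ≤ t ∨ K + 1 ≤ i.val)
    · rw [if_pos (⟨hzval, hc⟩ : z.val = 0 ∧ _), if_pos hc]; push_cast; ring
    · rw [if_neg (fun hh => hc hh.2), if_neg hc]; push_cast; ring
  -- cardinality computations
  have hmemz : ∀ i : Fin n, (i ≠ z ↔ i.val ≠ 0) := by
    intro i
    constructor
    · intro h hh; exact h (Fin.ext hh)
    · intro h hh; exact h (by rw [hh])
  have hcard1 : ((univ.erase z).filter
      (fun i : Fin n => i.val ≤ t ∨ K + 1 ≤ i.val)).card = n - 1 - k := by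
    have hEq : (univ.erase z).filter (fun i : Fin n => i.val ≤ t ∨ K + 1 ≤ i.val)
        = univ.filter (fun i : Fin n => i.val ≠ 0 ∧ (i.val ≤ t ∨ K + 1 ≤ i.val)) := by
      ext i
      simp only [Finset.mem_filter, Finset.mem_erase, Finset.mem_univ, true_and, and_true,
        hmemz i]
    rw [hEq, card_filter_val n (fun v => v ≠ 0 ∧ (v ≤ t ∨ K + 1 ≤ v))]
    have hset : (Finset.range n).filter (fun v => v ≠ 0 ∧ (v ≤ t ∨ K + 1 ≤ v))
        = Finset.Icc 1 t ∪ Finset.Icc (K + 1) (n - 1) := by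
      ext v
      simp only [Finset.mem_filter, Finset.mem_range, Finset.mem_union, Finset.mem_Icc]
      omega
    rw [hset, Finset.card_union_of_disjoint, Nat.card_Icc, Nat.card_Icc]
    · omega
    · rw [Finset.disjoint_left]
      intro a ha hb
      simp only [Finset.mem_Icc] at ha hb
      omega
  have hcard2 : ((univ.erase z).filter
      (fun i : Fin n => ¬(i.val ≤ t ∨ K + 1 ≤ i.val))).card = k := by
    have hEq : (univ.erase z).filter (fun i : Fin n => ¬(i.val ≤ t ∨ K + 1 ≤ i.val))
        = univ.filter (fun i : Fin n => i.val ≠ 0 ∧ ¬(i.val ≤ t ∨ K + 1 ≤ i.val)) := by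
      ext i
      simp only [Finset.mem_filter, Finset.mem_erase, Finset.mem_univ, true_and, and_true,
        hmemz i]
    rw [hEq, card_filter_val n (fun v => v ≠ 0 ∧ ¬(v ≤ t ∨ K + 1 ≤ v))]
    have hset : (Finset.range n).filter (fun v => v ≠ 0 ∧ ¬(v ≤ t ∨ K + 1 ≤ v))
        = Finset.Icc (t + 1) K := by
      ext v
      simp only [Finset.mem_filter, Finset.mem_range, Finset.mem_Icc]
      omega
    rw [hset, Nat.card_Icc]
    omega
  have hPdiag : ∏ i ∈ univ.erase z, M i i = (μ - (α:ℂ)) ^ (n - 1 - k) * μ ^ k := by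
    rw [Finset.prod_congr rfl (fun i hi => hMdiag i (Finset.mem_erase.mp hi).1)]
    rw [Finset.prod_ite _ _, Finset.prod_const, Finset.prod_const, hcard1, hcard2]
  have hterm : ∀ i ∈ univ.erase z,
      M z i * M i z * ∏ j ∈ (univ.erase z).erase i, M j j
        = if i.val ≤ t then ((1 - α : ℝ):ℂ) ^ 2 * ((μ - (α:ℂ)) ^ (n - 2 - k) * μ ^ k)
          else 0 := by
    intro i hi
    have hiz := (Finset.mem_erase.mp hi).1
    have hival : i.val ≠ 0 := (hmemz i).mp hiz
    by_cases hit : i.val ≤ t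
    · rw [if_pos hit]
      have h1 : M z i = -((1 - α : ℝ):ℂ) := by
        rw [hMz i hiz, if_pos ⟨by omega, by omega⟩]
      have h2 : M i z = -((1 - α : ℝ):ℂ) := by
        rw [hMcol i hiz, if_pos (Or.inl hit)]
      have hc1 : (((univ.erase z).erase i).filter
          (fun j : Fin n => j.val ≤ t ∨ K + 1 ≤ j.val)).card = n - 2 - k := by
        have hEq : ((univ.erase z).erase i).filter
            (fun j : Fin n => j.val ≤ t ∨ K + 1 ≤ j.val)
            = univ.filter (fun j : Fin n =>
                j.val ≠ i.val ∧ j.val ≠ 0 ∧ (j.val ≤ t ∨ K + 1 ≤ j.val)) := by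
          ext j
          have hji : (j ≠ i ↔ j.val ≠ i.val) := by
            constructor
            · intro h hh; exact h (Fin.ext hh)
            · intro h hh; exact h (by rw [hh])
          simp only [Finset.mem_filter, Finset.mem_erase, Finset.mem_univ, true_and,
            and_true, hmemz j, hji]
          tauto
        rw [hEq, card_filter_val n
          (fun v => v ≠ i.val ∧ v ≠ 0 ∧ (v ≤ t ∨ K + 1 ≤ v))]
        have hset : (Finset.range n).filter
            (fun v => v ≠ i.val ∧ v ≠ 0 ∧ (v ≤ t ∨ K + 1 ≤ v))
            = (Finset.Icc 1 t ∪ Finset.Icc (K + 1) (n - 1)).erase i.val := by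
          ext v
          simp only [Finset.mem_filter, Finset.mem_range, Finset.mem_erase,
            Finset.mem_union, Finset.mem_Icc]
          omega
        rw [hset, Finset.card_erase_of_mem, Finset.card_union_of_disjoint,
          Nat.card_Icc, Nat.card_Icc]
        · omega
        · rw [Finset.disjoint_left]
          intro a ha hb
          simp only [Finset.mem_Icc] at ha hb
          omega
        · simp only [Finset.mem_union, Finset.mem_Icc]
          omega
      have hc2 : (((univ.erase z).erase i).filter
          (fun j : Fin n => ¬(j.val ≤ t ∨ K + 1 ≤ j.val))).card = k := by
        have hEq : ((univ.erase z).erase i).filter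
            (fun j : Fin n => ¬(j.val ≤ t ∨ K + 1 ≤ j.val))
            = univ.filter (fun j : Fin n =>
                j.val ≠ i.val ∧ j.val ≠ 0 ∧ ¬(j.val ≤ t ∨ K + 1 ≤ j.val)) := by
          ext j
          have hji : (j ≠ i ↔ j.val ≠ i.val) := by
            constructor
            · intro h hh; exact h (Fin.ext hh)
            · intro h hh; exact h (by rw [hh])
          simp only [Finset.mem_filter, Finset.mem_erase, Finset.mem_univ, true_and,
            and_true, hmemz j, hji]
          tauto
        rw [hEq, card_filter_val n
          (fun v => v ≠ i.val ∧ v ≠ 0 ∧ ¬(v ≤ t ∨ K + 1 ≤ v))]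
        have hset : (Finset.range n).filter
            (fun v => v ≠ i.val ∧ v ≠ 0 ∧ ¬(v ≤ t ∨ K + 1 ≤ v))
            = Finset.Icc (t + 1) K := by
          ext v
          simp only [Finset.mem_filter, Finset.mem_range, Finset.mem_Icc]
          omega
        rw [hset, Nat.card_Icc]
        omega
      have hprod : ∏ j ∈ (univ.erase z).erase i, M j j
          = (μ - (α:ℂ)) ^ (n - 2 - k) * μ ^ k := by
        rw [Finset.prod_congr rfl (fun j hj =>
          hMdiag j (Finset.mem_erase.mp (Finset.mem_of_mem_erase hj)).1)]
        rw [Finset.prod_ite _ _, Finset.prod_const, Finset.prod_const, hc1, hc2]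
      rw [h1, h2, hprod]
      ring
    · rw [if_neg hit]
      by_cases hiK : i.val ≤ K
      · have h2 : M i z = 0 := by rw [hMcol i hiz, if_neg (by omega)]
        rw [h2]; ring
      · have h1 : M z i = 0 := by rw [hMz i hiz, if_neg (by omega)]
        rw [h1]; ring
  have hcardt : ((univ.erase z).filter (fun i : Fin n => i.val ≤ t)).card = t := by
    have hEq : (univ.erase z).filter (fun i : Fin n => i.val ≤ t)
        = univ.filter (fun i : Fin n => i.val ≠ 0 ∧ i.val ≤ t) := by
      ext i
      simp only [Finset.mem_filter, Finset.mem_erase, Finset.mem_univ, true_and, and_true,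
        hmemz i]
    rw [hEq, card_filter_val n (fun v => v ≠ 0 ∧ v ≤ t)]
    have hset : (Finset.range n).filter (fun v => v ≠ 0 ∧ v ≤ t) = Finset.Icc 1 t := by
      ext v
      simp only [Finset.mem_filter, Finset.mem_range, Finset.mem_Icc]
      omega
    rw [hset, Nat.card_Icc]
    omega
  have hsum : ∑ i ∈ univ.erase z, M z i * M i z * ∏ j ∈ (univ.erase z).erase i, M j j
      = (t : ℂ) * ((1 - α : ℝ):ℂ) ^ 2 * ((μ - (α:ℂ)) ^ (n - 2 - k) * μ ^ k) := by
    rw [Finset.sum_congr rfl hterm, Finset.sum_ite, Finset.sum_const,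
      Finset.sum_const_zero, add_zero, hcardt, nsmul_eq_mul]
    ring
  rw [det_arrowhead z M harrow, hMzz, hPdiag, hsum]
  push_cast
  ring

lemma key_isGreatest (n m k t K : ℕ) (hn : 2 ≤ n) (ht : t = m - (n - 1))
    (hKdef : K = t + k) (hK : K ≤ n - 1) (α : ℝ) (hα0 : 0 ≤ α) (hα1 : α ≤ 1) :
    IsGreatest {r : ℝ | ∃ μ : ℂ,
        ((Aalpha α (starMat n m k)).map (fun x => (x : ℂ))).charpoly.IsRoot μ
          ∧ r = ‖μ‖}
      (rhoAux α (K : ℝ) (t : ℝ)) := by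
  classical
  have hn0 : 0 < n := by omega
  have hT : (0:ℝ) ≤ (t:ℝ) := Nat.cast_nonneg t
  set ρ := rhoAux α (K : ℝ) (t : ℝ) with hρdef
  set r1 := r1Aux α (K : ℝ) (t : ℝ) with hr1def
  have hρα : α ≤ ρ := rho_ge_alpha α _ _ hT
  have hραk : α * K ≤ ρ := rho_ge_ak α _ _ hT
  have hρ0 : (0:ℝ) ≤ ρ := le_trans hα0 hρα
  have hr1ρ : r1 ≤ ρ := r1_le_rho α _ _ hT
  have hnegρ : -ρ ≤ r1 := neg_rho_le_r1 α _ _ hα0 (Nat.cast_nonneg K) hT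
  set A := starMat n m k with hA
  set Bc := (Aalpha α A).map (fun x => (x : ℂ)) with hBc
  have hformula := det_formula n m k t K hn ht hKdef hK α
  have hfactor : ∀ μ : ℂ, (μ - (α:ℂ)) * (μ - (α:ℂ) * (K:ℕ)) - (t:ℂ) * (1 - (α:ℂ)) ^ 2
      = (μ - ((r1 : ℝ) : ℂ)) * (μ - ((ρ : ℝ) : ℂ)) := by
    intro μ
    have h := quad_factor_c α (K : ℝ) (t : ℝ) hT μ
    rw [hρdef, hr1def]
    rw [← h]
    push_cast
    ring
  have hkey : ∀ μ : ℂ, (μ - (α:ℂ)) * ((μ • (1 : Matrix (Fin n) (Fin n) ℂ) - Bc).det)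
      = μ ^ k * (μ - (α:ℂ)) ^ (n - 1 - k)
        * ((μ - ((r1 : ℝ):ℂ)) * (μ - ((ρ : ℝ):ℂ))) := by
    intro μ
    rw [hBc, hA, hformula μ, ← hfactor μ]
    by_cases htz : t = 0
    · rw [htz]
      push_cast
      ring
    · have hk2 : k ≤ n - 2 := by omega
      have hpow : (μ - (α:ℂ)) * (μ - (α:ℂ)) ^ (n - 2 - k) = (μ - (α:ℂ)) ^ (n - 1 - k) := by
        rw [← pow_succ']
        congr 1
        omega
      rw [show (n - 1 - k) = (n - 2 - k) + 1 from by omega]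
      ring
  constructor
  · -- ρ is attained
    refine ⟨((ρ : ℝ) : ℂ), ?_, ?_⟩
    · rw [isRoot_charpoly_iff]
      by_cases hρα' : ρ = α
      · -- zero column argument
        have htα : (t:ℝ) * (1 - α) ^ 2 = 0 := by
          have hq := quad_factor α (K : ℝ) (t : ℝ) α hT
          rw [← hr1def, ← hρdef, hρα'] at hq
          nlinarith [hq]
        have hEntry : ∀ (ν : ℂ) (i j : Fin n),
            (ν • (1 : Matrix (Fin n) (Fin n) ℂ) - Bc) i j
              = (if i = j then ν else 0)
                - ((α * (if i = j then ∑ l, A i l else 0) + (1 - α) * A i j : ℝ) : ℂ) := by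
          intro ν i j
          simp only [hBc, Matrix.sub_apply, Matrix.smul_apply, Matrix.one_apply,
            Matrix.map_apply, Aalpha, Matrix.add_apply, Matrix.smul_apply,
            Matrix.diagonal_apply, smul_eq_mul]
          by_cases hij : i = j <;> simp [hij]
        by_cases hKn : K ≤ n - 2
        · -- column n-1 is zero
          apply Matrix.det_eq_zero_of_column_eq_zero (⟨n - 1, by omega⟩ : Fin n)
          intro i
          set j : Fin n := ⟨n - 1, by omega⟩ with hj
          have hjval : j.val = n - 1 := rfl
          rw [hEntry]
          by_cases hij : i = j
          · rw [if_pos hij, if_pos hij, hij]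
            have hrs : ∑ l, A j l = 1 := by
              rw [hA, starMat_rowsum_leaf n m k t K ht hKdef j (by omega), if_pos (by omega)]
            have hdiag : A j j = 0 := by
              rw [hA, starMat_leaf n m k t K ht hKdef j j (by omega), if_neg (by omega)]
            rw [hrs, hdiag, hρα']
            push_cast
            ring
          · rw [if_neg hij, if_neg hij]
            have hAij : A i j = 0 := by
              by_cases hiz : i.val = 0
              · rw [hA, starMat_hub n m k t K hn ht hKdef i j hiz, if_neg (by omega)]
              · rw [hA, starMat_leaf n m k t K ht hKdef i j hiz, if_neg (by omega)]
            rw [hAij]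
            push_cast
            ring
        · -- K = n - 1, column 0 is zero
          have hKn1 : K = n - 1 := by omega
          have hαK : α * K = α := by
            have h1 : α * 1 ≤ α * K := by
              apply mul_le_mul_of_nonneg_left _ hα0
              exact_mod_cast Nat.one_le_iff_ne_zero.mpr (by omega)
            rw [hρα'] at hραk
            rw [mul_one] at h1
            linarith
          apply Matrix.det_eq_zero_of_column_eq_zero (⟨0, hn0⟩ : Fin n)
          intro i
          set z : Fin n := ⟨0, hn0⟩ with hz
          have hzval : z.val = 0 := rfl
          have hilt : i.val < n := i.isLt
          rw [hEntry]
          by_cases hiz : i = z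
          · rw [if_pos hiz, if_pos hiz, hiz]
            have hrs : ∑ l, A z l = (K:ℝ) :=
              starMat_rowsum_hub n m k t K hn ht hKdef hK z rfl
            have hdiag : A z z = 0 := by
              rw [hA, starMat_hub n m k t K hn ht hKdef z z rfl, if_neg (by omega)]
            rw [hrs, hdiag, hρα']
            have hsimp : α * (K:ℝ) + (1 - α) * 0 = α := by rw [mul_zero, add_zero, hαK]
            rw [hsimp, sub_self]
          · rw [if_neg hiz, if_neg hiz]
            have hival : i.val ≠ 0 := fun hh => hiz (Fin.ext hh)
            have hAiz : A i z = if i.val ≤ t then (1:ℝ) else 0 := by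
              rw [hA, starMat_leaf n m k t K ht hKdef i z hival]
              have : (z.val = 0 ∧ (i.val ≤ t ∨ K + 1 ≤ i.val)) ↔ i.val ≤ t := by
                constructor
                · intro hh
                  rcases hh.2 with h | h
                  · exact h
                  · exfalso; omega
                · intro hh; exact ⟨rfl, Or.inl hh⟩
              rw [if_congr this rfl rfl]
            rw [hAiz]
            by_cases hit : i.val ≤ t
            · have ht1 : (1:ℝ) - α = 0 := by
                have htpos : (0:ℝ) < (t:ℝ) := by
                  have : 1 ≤ t := by omega
                  exact_mod_cast this
                have : ((1:ℝ) - α) ^ 2 = 0 := by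
                  rcases mul_eq_zero.mp htα with h | h
                  · exact absurd h (ne_of_gt htpos)
                  · exact h
                exact pow_eq_zero_iff (by norm_num) |>.mp this
              rw [if_pos hit, ht1]
              push_cast
              ring
            · rw [if_neg hit]
              push_cast
              ring
      · -- ρ ≠ α : use the determinant identity
        have h := hkey ((ρ : ℝ) : ℂ)
        have hzero : (((ρ : ℝ):ℂ) - ((ρ : ℝ):ℂ)) = 0 := sub_self _
        rw [hzero, mul_zero, mul_zero] at h
        have hne : (((ρ : ℝ):ℂ) - (α:ℂ)) ≠ 0 := by
          intro hh
          apply hρα'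
          have := sub_eq_zero.mp hh
          exact_mod_cast this
        exact (mul_eq_zero.mp h).resolve_left hne
    · rw [Complex.norm_real, Real.norm_eq_abs, abs_of_nonneg hρ0]
  · -- upper bound
    rintro r ⟨μ, hroot, rfl⟩
    rw [isRoot_charpoly_iff] at hroot
    by_cases hμα : μ = (α:ℂ)
    · rw [hμα, Complex.norm_real, Real.norm_eq_abs, abs_of_nonneg hα0]
      exact hρα
    · have h := hkey μ
      rw [hroot, mul_zero] at h
      have h0 : μ ^ k * (μ - (α:ℂ)) ^ (n - 1 - k)
          * ((μ - ((r1 : ℝ):ℂ)) * (μ - ((ρ : ℝ):ℂ))) = 0 := h.symm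
      rcases mul_eq_zero.mp h0 with h1 | h1
      · rcases mul_eq_zero.mp h1 with h2 | h2
        · have : μ = 0 := by
            rcases Nat.eq_zero_or_pos k with hk0 | hk0
            · rw [hk0, pow_zero] at h2; exact absurd h2 one_ne_zero
            · exact pow_eq_zero_iff (by omega) |>.mp h2
          rw [this]
          simpa using hρ0
        · exfalso
          apply hμα
          have : μ - (α:ℂ) = 0 := by
            rcases Nat.eq_zero_or_pos (n - 1 - k) with hk0 | hk0
            · rw [hk0, pow_zero] at h2; exact absurd h2 one_ne_zero
            · exact pow_eq_zero_iff (by omega) |>.mp h2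
          exact sub_eq_zero.mp this
      · rcases mul_eq_zero.mp h1 with h2 | h2
        · have : μ = ((r1 : ℝ):ℂ) := sub_eq_zero.mp h2
          rw [this, Complex.norm_real, Real.norm_eq_abs]
          rw [abs_le]
          exact ⟨hnegρ, hr1ρ⟩
        · have : μ = ((ρ : ℝ):ℂ) := sub_eq_zero.mp h2
          rw [this, Complex.norm_real, Real.norm_eq_abs, abs_of_nonneg hρ0]


lemma specRad_eq (n m k t K : ℕ) (hn : 2 ≤ n) (ht : t = m - (n - 1))
    (hKdef : K = t + k) (hK : K ≤ n - 1) (α : ℝ) (hα0 : 0 ≤ α) (hα1 : α ≤ 1) :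
    specRad (Aalpha α (starMat n m k)) = rhoAux α (K : ℝ) (t : ℝ) :=
  (key_isGreatest n m k t K hn ht hKdef hK α hα0 hα1).csSup_eq


end entries

end AuxSpecRad

/-- Among mixed stars of order `n`, size `m` and center out-degree `m-n+k+1`
(`0 ≤ k ≤ 2n-m-2`), the `A_α`-spectral radius is maximized at `k = 2n-m-2` (center
out-degree `n-1`), where it equals the largest root of
`λ² - αnλ + α²(n-1) - (1-α)²(m-n+1)`. -/
theorem specRad_starMat_max {n m : ℕ} (hn : 2 ≤ n) (hm₁ : n - 1 ≤ m) (hm₂ : m ≤ 2 * n - 2)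
    (α : ℝ) (hα : α ∈ Set.Icc (0:ℝ) 1) :
    (∀ k, k ≤ 2 * n - m - 2 →
      specRad (Aalpha α (starMat n m k)) ≤
        specRad (Aalpha α (starMat n m (2 * n - m - 2)))) ∧
    (specRad (Aalpha α (starMat n m (2 * n - m - 2))) ^ 2
        - α * n * specRad (Aalpha α (starMat n m (2 * n - m - 2)))
        + α ^ 2 * ((n : ℝ) - 1) - (1 - α) ^ 2 * ((m : ℝ) - n + 1) = 0 ∧
      ∀ x : ℝ, x ^ 2 - α * n * x + α ^ 2 * ((n : ℝ) - 1)
          - (1 - α) ^ 2 * ((m : ℝ) - n + 1) = 0 →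
        x ≤ specRad (Aalpha α (starMat n m (2 * n - m - 2)))) := by
  obtain ⟨hα0, hα1⟩ := hα
  set t : ℕ := m - (n - 1) with ht
  have h2 := specRad_eq n m (2 * n - m - 2) t (t + (2 * n - m - 2)) hn rfl rfl
    (by omega) α hα0 hα1
  have hcastK : ((t + (2 * n - m - 2) : ℕ) : ℝ) = (n : ℝ) - 1 := by
    have h : t + (2 * n - m - 2) = n - 1 := by omega
    rw [h, Nat.cast_sub (by omega)]
    norm_num
  have hcastT : ((t : ℕ) : ℝ) = (m : ℝ) - n + 1 := by
    rw [ht, Nat.cast_sub (by omega), Nat.cast_sub (by omega)]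
    push_cast
    ring
  have hT' : (0:ℝ) ≤ (m : ℝ) - n + 1 := by rw [← hcastT]; exact Nat.cast_nonneg _
  rw [hcastK, hcastT] at h2
  constructor
  · intro k hk
    have h1 := specRad_eq n m k t (t + k) hn rfl rfl (by omega) α hα0 hα1
    rw [h1, h2, hcastT]
    apply rho_mono α _ _ _ hα0 _ hT'
    have : ((t + k : ℕ) : ℝ) ≤ (n : ℝ) - 1 := by
      rw [← hcastK]
      exact_mod_cast (by omega : t + k ≤ t + (2 * n - m - 2))
    exact this
  · rw [h2]
    constructor
    · have hq := quad_factor α ((n:ℝ) - 1) ((m:ℝ) - n + 1)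
        (rhoAux α ((n:ℝ) - 1) ((m:ℝ) - n + 1)) hT'
      linear_combination hq
    · intro x hx
      have hq := quad_factor α ((n:ℝ) - 1) ((m:ℝ) - n + 1) x hT'
      have hzero : (x - r1Aux α ((n:ℝ) - 1) ((m:ℝ) - n + 1))
          * (x - rhoAux α ((n:ℝ) - 1) ((m:ℝ) - n + 1)) = 0 := by
        rw [← hq]
        linear_combination hx
      rcases mul_eq_zero.mp hzero with h | h
      · have hxr : x = r1Aux α ((n:ℝ) - 1) ((m:ℝ) - n + 1) := by linarith [sub_eq_zero.mp h]
        rw [hxr]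
        exact r1_le_rho α _ _ hT'
      · have hxr : x = rhoAux α ((n:ℝ) - 1) ((m:ℝ) - n + 1) := by linarith [sub_eq_zero.mp h]
        rw [hxr]
end
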